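/- arXiv:1312.7820 — 4 statements merged into one kernel-verified Lean document; each statement's English description precedes it below -/
import Mathlib

section
/- Let Γ = Γ_w be a stepped plane that contains no translate of any of the four forbidden patterns. Then for every i ∈ {1,2,3}, the stepped plane Σᵢ(Γ) contains no translate of any of the four forbidden patterns. -/
open Matrix
open scoped Classical

noncomputable section

abbrev Z3 := Fin 3 → ℤ
abbrev R3 := Fin 3 → ℝ

/-- The inner product `⟨x, v⟩` of an integer vector with a real vector. -/
def dot3 (x : Z3) (v : R3) : ℝ := ∑ i, (x i : ℝ) * v i

/-- Two points of `ℤ³` are 2-adjacent if `‖x − y‖₁ = 1`. -/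
def adj3 (x y : Z3) : Prop := (∑ i, |x i - y i|) = 1

/-- A subset of `ℤ³` is 2-connected if it is nonempty and any two of its points are
joined by a finite chain of points of the set with consecutive points 2-adjacent. -/
def Connected3 (A : Set Z3) : Prop :=
  A.Nonempty ∧ ∀ x ∈ A, ∀ y ∈ A,
    Relation.ReflTransGen (fun a b => b ∈ A ∧ adj3 a b) x y

/-- The arithmetical discrete plane `P(v, ω)`. -/
def Plane (v : R3) (ω : ℝ) : Set Z3 := {x | 0 ≤ dot3 x v ∧ dot3 x v < ω}

/-- The connecting thickness `Ω(v)`. -/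
def omegaConn (v : R3) : ℝ := sInf {ω : ℝ | 0 ≤ ω ∧ Connected3 (Plane v ω)}

/-- `O₃⁺ = {v : 0 ≤ v₁ ≤ v₂ ≤ v₃}`. -/
def O3 : Set R3 := {v | 0 ≤ v 0 ∧ v 0 ≤ v 1 ∧ v 1 ≤ v 2}

/-- The ordered fully subtractive map. -/
def FS (v : R3) : R3 :=
  if v 0 ≤ v 1 - v 0 ∧ v 1 - v 0 ≤ v 2 - v 0 then ![v 0, v 1 - v 0, v 2 - v 0]
  else if v 1 - v 0 < v 0 ∧ v 0 ≤ v 2 - v 0 then ![v 1 - v 0, v 0, v 2 - v 0]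
  else ![v 1 - v 0, v 2 - v 0, v 0]

/-- `F₃ = {v ∈ O₃⁺ : v₁⁽ⁿ⁾ + v₂⁽ⁿ⁾ > v₃⁽ⁿ⁾ for all n}`. -/
def F3set : Set R3 :=
  {v | v ∈ O3 ∧ ∀ n : ℕ, (FS^[n] v) 2 < (FS^[n] v) 0 + (FS^[n] v) 1}

/-- Branch index of `F` at `v`: values `0, 1, 2` encode the branches labelled `1, 2, 3`. -/
def FSidx (v : R3) : Fin 3 :=
  if v 0 ≤ v 1 - v 0 ∧ v 1 - v 0 ≤ v 2 - v 0 then 0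
  else if v 1 - v 0 < v 0 ∧ v 0 ≤ v 2 - v 0 then 1
  else 2

/-- The matrices `M₁, M₂, M₃` of the fully subtractive algorithm. -/
def Mmat : Fin 3 → Matrix (Fin 3) (Fin 3) ℤ :=
  ![!![1,0,0; 1,1,0; 1,0,1], !![0,1,0; 1,1,0; 0,1,1], !![0,0,1; 1,0,1; 0,1,1]]

def e1 : Z3 := ![1,0,0]

/-- The product `M₁ ⋯ Mₙ` of the matrices associated with the F-expansion of `v`. -/
def prodM (v : R3) (n : ℕ) : Matrix (Fin 3) (Fin 3) ℤ :=
  ((List.range n).map (fun j => Mmat (FSidx (FS^[j] v)))).prod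

/-- The translation vector `((M₁⋯Mₙ)ᵀ)⁻¹ · e₁`. -/
def transVec (v : R3) (n : ℕ) : Z3 := ((prodM v n)ᵀ)⁻¹ *ᵥ e1

/-- The sequence `Tₙ` of subsets of `ℤ³`: `T₀ = {0}`, `T_{n+1} = Tₙ ∪ (Tₙ + ((M₁⋯Mₙ)ᵀ)⁻¹·e₁)`
(so that `T₁ = {0, e₁}`, the empty matrix product being the identity). -/
def Tseq (v : R3) : ℕ → Set Z3
  | 0 => {0}
  | n + 1 => Tseq v n ∪ ((fun x => x + transVec v n) '' Tseq v n)

/-- A unit face is a pair `(x, i)` of its distinguished vertex `x ∈ ℤ³` and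
its type `i ∈ Fin 3` (encoding the types `1, 2, 3`). A pattern is a set of faces. -/
abbrev Face := Z3 × Fin 3

/-- The lower half unit cube `U = [0,1]* ∪ [0,2]* ∪ [0,3]*`. -/
def Uset : Set Face := {(0, 0), (0, 1), (0, 2)}

/-- Image of the face `[0, t]*` under the dual substitution `Σᵢ`. -/
def dualBase (i t : Fin 3) : Set Face :=
  if t = i then Uset
  else if (i = 0 ∧ t = 1) ∨ (i ≠ 0 ∧ t = 0) then {(e1, 1)}
  else {(e1, 2)}

/-- Image of a face under the dual substitution `Σᵢ`:
`Σᵢ([x,t]*) = (Mᵢᵀ)⁻¹ x + Σᵢ([0,t]*)`. -/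
def dualFace (i : Fin 3) (f : Face) : Set Face :=
  (fun g : Face => (((Mmat i)ᵀ)⁻¹ *ᵥ f.1 + g.1, g.2)) '' dualBase i f.2

/-- Dual substitution `Σᵢ` extended to patterns. -/
def dualPat (i : Fin 3) (P : Set Face) : Set Face := ⋃ f ∈ P, dualFace i f

/-- The translate of a pattern by `t ∈ ℤ³`. -/
def translatePat (t : Z3) (P : Set Face) : Set Face := (fun f : Face => (f.1 + t, f.2)) '' P

/-- The stepped plane `Γ_w`. -/
def stepped (w : R3) : Set Face := {f | 0 ≤ dot3 f.1 w ∧ dot3 f.1 w < w f.2}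

/-- The nine patterns of `L_FS` (base representatives, used up to translation). -/
def LFS : Set (Set Face) :=
  { {(0, 0), (0, 1)},
    {(0, 0), (![-1,1,0], 1)},
    {(0, 0), (0, 2)},
    {(0, 0), (![-1,0,1], 2)},
    {(0, 1), (0, 2)},
    {(0, 1), (![0,-1,1], 2)},
    {(0, 1), (![1,0,0], 1), (0, 2)},
    {(0, 2), (![1,0,0], 2), (0, 1)},
    {(0, 2), (![0,1,0], 2), (0, 0)} }

/-- The twelve two-face edge-connected patterns (base representatives). -/
def Ledge : Set (Set Face) :=
  { {(0, 0), (0, 1)},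
    {(0, 0), (![-1,1,0], 1)},
    {(0, 0), (0, 2)},
    {(0, 0), (![-1,0,1], 2)},
    {(0, 1), (0, 2)},
    {(0, 1), (![0,-1,1], 2)},
    {(0, 0), (![0,1,0], 0)},
    {(0, 0), (![0,0,1], 0)},
    {(0, 1), (![1,0,0], 1)},
    {(0, 1), (![0,0,1], 1)},
    {(0, 2), (![1,0,0], 2)},
    {(0, 2), (![0,1,0], 2)} }

/-- The four forbidden patterns
`[0,1]*∪[(0,1,0),1]*`, `[0,1]*∪[(0,0,1),1]*`, `[0,2]*∪[(0,0,1),2]*`, `[0,3]*∪[(1,1,0),3]*`. -/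
def Forbidden : Set (Set Face) :=
  { {(0, 0), (![0,1,0], 0)},
    {(0, 0), (![0,0,1], 0)},
    {(0, 1), (![0,0,1], 1)},
    {(0, 2), (![1,1,0], 2)} }

/-- A pattern `P` is `L`-covered if any two of its faces are joined by a chain of
translates of elements of `L`, all contained in `P`, with consecutive ones sharing a face. -/
def IsCovered (L : Set (Set Face)) (P : Set Face) : Prop :=
  ∀ e ∈ P, ∀ f ∈ P, ∃ n : ℕ, ∃ Q : Fin (n + 1) → Set Face,
    (∀ k, ∃ R ∈ L, ∃ t : Z3, Q k = translatePat t R) ∧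
    e ∈ Q 0 ∧ f ∈ Q (Fin.last n) ∧
    (∀ k, Q k ⊆ P) ∧
    (∀ k : Fin n, (Q k.castSucc ∩ Q k.succ).Nonempty)

/-- A pattern `P` is strongly `L`-covered if it is `L`-covered and every translate of an
element of `L_edge` contained in `P` is completed within `P` by a translate of an element of `L`. -/
def IsStronglyCovered (L : Set (Set Face)) (P : Set Face) : Prop :=
  IsCovered L P ∧
  ∀ X ∈ Ledge, ∀ t : Z3, translatePat t X ⊆ P →
    ∃ Y ∈ L, ∃ s : Z3, translatePat t X ⊆ translatePat s Y ∧ translatePat s Y ⊆ P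

/-- The geometric realization of a face in `ℝ³`. -/
def faceGeom (f : Face) : Set R3 :=
  {q | q f.2 = (f.1 f.2 : ℝ) ∧ ∀ j, j ≠ f.2 → (f.1 j : ℝ) ≤ q j ∧ q j ≤ (f.1 j : ℝ) + 1}

/-- The geometric realization of a pattern in `ℝ³`. -/
def patGeom (P : Set Face) : Set R3 := ⋃ f ∈ P, faceGeom f

/-- `A` is an `L_FS`-annulus of `P` in the stepped plane `Γ`. -/
def IsAnnulus (Γ P A : Set Face) : Prop :=
  IsCovered LFS P ∧ IsCovered LFS (A ∪ P) ∧ IsCovered LFS (Γ \ (A ∪ P)) ∧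
  IsStronglyCovered LFS A ∧
  A ∩ P = ∅ ∧
  patGeom P ∩ closure (patGeom (Γ \ (P ∪ A))) = ∅

/-- Apply a finite list of dual substitutions, the head being applied last:
`applySubs [i₁, …, iₙ] P = Σ_{i₁} ∘ ⋯ ∘ Σ_{iₙ}(P)`. -/
def applySubs : List (Fin 3) → Set Face → Set Face
  | [], P => P
  | i :: l, P => dualPat i (applySubs l P)

/-- The pattern `Pₙ = Σ_{i₁} ∘ ⋯ ∘ Σ_{iₙ}(U)` associated with the F-expansion of `v`. -/
def PatN (v : R3) (n : ℕ) : Set Face :=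
  applySubs ((List.range n).map (fun j => FSidx (FS^[j] v))) Uset

/-- The set `𝐏ₙ` of distinguished vertices of the faces of `Pₙ`. -/
def Pverts (v : R3) (n : ℕ) : Set Z3 := {x | ∃ t : Fin 3, (x, t) ∈ PatN v n}
-- test decode lemmas
lemma Mt_det (i : Fin 3) : IsUnit ((Mmat i)ᵀ).det := by
  rw [Int.isUnit_iff]; fin_cases i <;> decide

lemma Mt_cancel (i : Fin 3) (z : Z3) : (Mmat i)ᵀ *ᵥ (((Mmat i)ᵀ)⁻¹ *ᵥ z) = z := by
  rw [Matrix.mulVec_mulVec, Matrix.mul_nonsing_inv _ (Mt_det i),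
    Matrix.one_mulVec]

lemma decode {P : Set Face} {y : Z3} {s i : Fin 3}
    (h : (y, s) ∈ dualPat i P) :
    ∃ τ g1, ((Mmat i)ᵀ *ᵥ (y - g1), τ) ∈ P ∧ (g1, s) ∈ dualBase i τ := by
  simp only [dualPat, Set.mem_iUnion] at h
  obtain ⟨f, hf, hm⟩ := h
  obtain ⟨g, hg, heq⟩ := hm
  obtain ⟨heq1, heq2⟩ := Prod.mk.injEq .. ▸ heq
  have hx : f.1 = (Mmat i)ᵀ *ᵥ (y - g.1) := by
    have : ((Mmat i)ᵀ)⁻¹ *ᵥ f.1 = y - g.1 := eq_sub_of_add_eq heq1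
    rw [← this, Mt_cancel]
  refine ⟨f.2, g.1, ?_, ?_⟩
  · rwa [← hx, Prod.mk.eta]
  · rwa [← heq2, Prod.mk.eta]
lemma mv0 (u : Z3) : (Mmat 0)ᵀ *ᵥ u = ![u 0 + u 1 + u 2, u 1, u 2] := by
  funext j
  fin_cases j <;>
    simp [Mmat, Matrix.mulVec, dotProduct, Fin.sum_univ_three, Matrix.transpose] <;> ring

lemma mv1 (u : Z3) : (Mmat 1)ᵀ *ᵥ u = ![u 1, u 0 + u 1 + u 2, u 2] := by
  funext j
  fin_cases j <;>
    simp [Mmat, Matrix.mulVec, dotProduct, Fin.sum_univ_three, Matrix.transpose] <;> ring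

lemma mv2 (u : Z3) : (Mmat 2)ᵀ *ᵥ u = ![u 1, u 2, u 0 + u 1 + u 2] := by
  funext j
  fin_cases j <;>
    simp [Mmat, Matrix.mulVec, dotProduct, Fin.sum_univ_three, Matrix.transpose] <;> ring

lemma mem_stepped {w : R3} {x : Z3} {s : Fin 3} (hx : (x, s) ∈ stepped w) :
    0 ≤ (x 0 : ℝ) * w 0 + (x 1 : ℝ) * w 1 + (x 2 : ℝ) * w 2 ∧
      (x 0 : ℝ) * w 0 + (x 1 : ℝ) * w 1 + (x 2 : ℝ) * w 2 < w s := by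
  simpa [stepped, dot3, Fin.sum_univ_three] using hx

lemma mem_stepped' {w : R3} {x : Z3} {s : Fin 3}
    (h1 : 0 ≤ (x 0 : ℝ) * w 0 + (x 1 : ℝ) * w 1 + (x 2 : ℝ) * w 2)
    (h2 : (x 0 : ℝ) * w 0 + (x 1 : ℝ) * w 1 + (x 2 : ℝ) * w 2 < w s) :
    (x, s) ∈ stepped w := by
  simp [stepped, dot3, Fin.sum_univ_three]; exact ⟨h1, h2⟩
set_option maxHeartbeats 1000000 in
/-- If a stepped plane `Γ_w` contains no translate of a forbidden
pattern, then neither does `Σᵢ(Γ_w)`. -/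
theorem forbidden_avoided_by_image (w : R3) (hw : ∀ i, 0 ≤ w i)
    (h : ∀ X ∈ Forbidden, ∀ t : Z3, ¬ translatePat t X ⊆ stepped w) (i : Fin 3) :
    ∀ X ∈ Forbidden, ∀ t : Z3, ¬ translatePat t X ⊆ dualPat i (stepped w) := by
  intro X hX t hsub
  have w0 := hw 0; have w1 := hw 1; have w2 := hw 2
  have hi : i = 0 ∨ i = 1 ∨ i = 2 := by
    have : ∀ j : Fin 3, j = 0 ∨ j = 1 ∨ j = 2 := by decide
    exact this i
  simp only [Forbidden, Set.mem_insert_iff, Set.mem_singleton_iff] at hX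
  rcases hX with rfl | rfl | rfl | rfl <;> rcases hi with rfl | rfl | rfl
  · have hA : ∀ d : Z3, ∀ s : Fin 3,
        ((d, s) : Face) ∈ ({((0:Z3), (0:Fin 3)), (![0,1,0], 0)} : Set Face) →
        (d + t, s) ∈ dualPat 0 (stepped w) := fun d s hd => hsub ⟨(d, s), hd, rfl⟩
    obtain ⟨τ1, g1, hP1, hg1⟩ := decode (hA 0 0 (Set.mem_insert _ _))
    obtain ⟨τ2, g2, hP2, hg2⟩ := decode (hA ![0,1,0] 0 (by simp))
    fin_cases τ1 <;> fin_cases τ2 <;>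
      simp [dualBase, Uset, Prod.ext_iff] at hg1 hg2 <;>
      subst hg1 <;> subst hg2 <;>
      obtain ⟨ha1, hb1⟩ := mem_stepped hP1 <;>
      obtain ⟨ha2, hb2⟩ := mem_stepped hP2 <;>
      simp only [mv0, e1, Pi.add_apply, Pi.sub_apply, Pi.zero_apply, Matrix.cons_val_zero,
        Matrix.cons_val_one, Matrix.head_cons, Matrix.cons_val_two, Matrix.tail_cons] at ha1 hb1 ha2 hb2 <;>
      push_cast at ha1 hb1 ha2 hb2 <;>
      linarith
  · have hA : ∀ d : Z3, ∀ s : Fin 3,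
        ((d, s) : Face) ∈ ({((0:Z3), (0:Fin 3)), (![0,1,0], 0)} : Set Face) →
        (d + t, s) ∈ dualPat 1 (stepped w) := fun d s hd => hsub ⟨(d, s), hd, rfl⟩
    obtain ⟨τ1, g1, hP1, hg1⟩ := decode (hA 0 0 (Set.mem_insert _ _))
    obtain ⟨τ2, g2, hP2, hg2⟩ := decode (hA ![0,1,0] 0 (by simp))
    fin_cases τ1 <;> fin_cases τ2 <;>
      simp [dualBase, Uset, Prod.ext_iff] at hg1 hg2 <;>
      subst hg1 <;> subst hg2 <;>
      obtain ⟨ha1, hb1⟩ := mem_stepped hP1 <;>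
      obtain ⟨ha2, hb2⟩ := mem_stepped hP2 <;>
      simp only [mv1, e1, Pi.add_apply, Pi.sub_apply, Pi.zero_apply, Matrix.cons_val_zero,
        Matrix.cons_val_one, Matrix.head_cons, Matrix.cons_val_two, Matrix.tail_cons] at ha1 hb1 ha2 hb2 <;>
      push_cast at ha1 hb1 ha2 hb2 <;>
      linarith
  · have hA : ∀ d : Z3, ∀ s : Fin 3,
        ((d, s) : Face) ∈ ({((0:Z3), (0:Fin 3)), (![0,1,0], 0)} : Set Face) →
        (d + t, s) ∈ dualPat 2 (stepped w) := fun d s hd => hsub ⟨(d, s), hd, rfl⟩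
    obtain ⟨τ1, g1, hP1, hg1⟩ := decode (hA 0 0 (Set.mem_insert _ _))
    obtain ⟨τ2, g2, hP2, hg2⟩ := decode (hA ![0,1,0] 0 (by simp))
    fin_cases τ1 <;> fin_cases τ2 <;>
      simp [dualBase, Uset, Prod.ext_iff] at hg1 hg2 <;>
      subst hg1 <;> subst hg2 <;>
      obtain ⟨ha1, hb1⟩ := mem_stepped hP1 <;>
      obtain ⟨ha2, hb2⟩ := mem_stepped hP2 <;>
      simp only [mv2, e1, Pi.add_apply, Pi.sub_apply, Pi.zero_apply, Matrix.cons_val_zero,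
        Matrix.cons_val_one, Matrix.head_cons, Matrix.cons_val_two, Matrix.tail_cons] at ha1 hb1 ha2 hb2 <;>
      push_cast at ha1 hb1 ha2 hb2 <;>
      linarith
  · have hA : ∀ d : Z3, ∀ s : Fin 3,
        ((d, s) : Face) ∈ ({((0:Z3), (0:Fin 3)), (![0,0,1], 0)} : Set Face) →
        (d + t, s) ∈ dualPat 0 (stepped w) := fun d s hd => hsub ⟨(d, s), hd, rfl⟩
    obtain ⟨τ1, g1, hP1, hg1⟩ := decode (hA 0 0 (Set.mem_insert _ _))
    obtain ⟨τ2, g2, hP2, hg2⟩ := decode (hA ![0,0,1] 0 (by simp))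
    fin_cases τ1 <;> fin_cases τ2 <;>
      simp [dualBase, Uset, Prod.ext_iff] at hg1 hg2 <;>
      subst hg1 <;> subst hg2 <;>
      obtain ⟨ha1, hb1⟩ := mem_stepped hP1 <;>
      obtain ⟨ha2, hb2⟩ := mem_stepped hP2 <;>
      simp only [mv0, e1, Pi.add_apply, Pi.sub_apply, Pi.zero_apply, Matrix.cons_val_zero,
        Matrix.cons_val_one, Matrix.head_cons, Matrix.cons_val_two, Matrix.tail_cons] at ha1 hb1 ha2 hb2 <;>
      push_cast at ha1 hb1 ha2 hb2 <;>
      linarith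
  · have hA : ∀ d : Z3, ∀ s : Fin 3,
        ((d, s) : Face) ∈ ({((0:Z3), (0:Fin 3)), (![0,0,1], 0)} : Set Face) →
        (d + t, s) ∈ dualPat 1 (stepped w) := fun d s hd => hsub ⟨(d, s), hd, rfl⟩
    obtain ⟨τ1, g1, hP1, hg1⟩ := decode (hA 0 0 (Set.mem_insert _ _))
    obtain ⟨τ2, g2, hP2, hg2⟩ := decode (hA ![0,0,1] 0 (by simp))
    fin_cases τ1 <;> fin_cases τ2 <;>
      simp [dualBase, Uset, Prod.ext_iff] at hg1 hg2 <;>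
      subst hg1 <;> subst hg2 <;>
      obtain ⟨ha1, hb1⟩ := mem_stepped hP1 <;>
      obtain ⟨ha2, hb2⟩ := mem_stepped hP2 <;>
      simp only [mv1, e1, Pi.add_apply, Pi.sub_apply, Pi.zero_apply, Matrix.cons_val_zero,
        Matrix.cons_val_one, Matrix.head_cons, Matrix.cons_val_two, Matrix.tail_cons] at ha1 hb1 ha2 hb2 <;>
      push_cast at ha1 hb1 ha2 hb2 <;>
      linarith
  · have hA : ∀ d : Z3, ∀ s : Fin 3,
        ((d, s) : Face) ∈ ({((0:Z3), (0:Fin 3)), (![0,0,1], 0)} : Set Face) →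
        (d + t, s) ∈ dualPat 2 (stepped w) := fun d s hd => hsub ⟨(d, s), hd, rfl⟩
    obtain ⟨τ1, g1, hP1, hg1⟩ := decode (hA 0 0 (Set.mem_insert _ _))
    obtain ⟨τ2, g2, hP2, hg2⟩ := decode (hA ![0,0,1] 0 (by simp))
    fin_cases τ1 <;> fin_cases τ2 <;>
      simp [dualBase, Uset, Prod.ext_iff] at hg1 hg2 <;>
      subst hg1 <;> subst hg2 <;>
      obtain ⟨ha1, hb1⟩ := mem_stepped hP1 <;>
      obtain ⟨ha2, hb2⟩ := mem_stepped hP2 <;>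
      simp only [mv2, e1, Pi.add_apply, Pi.sub_apply, Pi.zero_apply, Matrix.cons_val_zero,
        Matrix.cons_val_one, Matrix.head_cons, Matrix.cons_val_two, Matrix.tail_cons] at ha1 hb1 ha2 hb2 <;>
      push_cast at ha1 hb1 ha2 hb2 <;>
      linarith
  · have hA : ∀ d : Z3, ∀ s : Fin 3,
        ((d, s) : Face) ∈ ({((0:Z3), (1:Fin 3)), (![0,0,1], 1)} : Set Face) →
        (d + t, s) ∈ dualPat 0 (stepped w) := fun d s hd => hsub ⟨(d, s), hd, rfl⟩
    obtain ⟨τ1, g1, hP1, hg1⟩ := decode (hA 0 1 (Set.mem_insert _ _))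
    obtain ⟨τ2, g2, hP2, hg2⟩ := decode (hA ![0,0,1] 1 (by simp))
    fin_cases τ1 <;> fin_cases τ2 <;>
      simp [dualBase, Uset, Prod.ext_iff] at hg1 hg2 <;>
      subst hg1 <;> subst hg2 <;>
      obtain ⟨ha1, hb1⟩ := mem_stepped hP1 <;>
      obtain ⟨ha2, hb2⟩ := mem_stepped hP2 <;>
      simp only [mv0, e1, Pi.add_apply, Pi.sub_apply, Pi.zero_apply, Matrix.cons_val_zero,
        Matrix.cons_val_one, Matrix.head_cons, Matrix.cons_val_two, Matrix.tail_cons] at ha1 hb1 ha2 hb2 <;>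
      push_cast at ha1 hb1 ha2 hb2 <;>
      first
        | linarith
        | exact h {((0:Z3), (1:Fin 3)), (![0,0,1], 1)} (by simp [Forbidden]) ((Mmat 0)ᵀ *ᵥ t) (by
            intro f hf
            simp only [translatePat, Set.mem_image, Set.mem_insert_iff,
              Set.mem_singleton_iff] at hf
            obtain ⟨g, hg | hg, rfl⟩ := hf <;> subst hg <;>
              refine mem_stepped' ?_ ?_ <;>
              simp only [mv0, e1, Pi.add_apply, Pi.sub_apply, Pi.zero_apply, Matrix.cons_val_zero,
        Matrix.cons_val_one, Matrix.head_cons, Matrix.cons_val_two, Matrix.tail_cons] <;>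
              push_cast <;> linarith)
  · have hA : ∀ d : Z3, ∀ s : Fin 3,
        ((d, s) : Face) ∈ ({((0:Z3), (1:Fin 3)), (![0,0,1], 1)} : Set Face) →
        (d + t, s) ∈ dualPat 1 (stepped w) := fun d s hd => hsub ⟨(d, s), hd, rfl⟩
    obtain ⟨τ1, g1, hP1, hg1⟩ := decode (hA 0 1 (Set.mem_insert _ _))
    obtain ⟨τ2, g2, hP2, hg2⟩ := decode (hA ![0,0,1] 1 (by simp))
    fin_cases τ1 <;> fin_cases τ2 <;>
      simp [dualBase, Uset, Prod.ext_iff] at hg1 hg2 <;>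
      subst hg1 <;> subst hg2 <;>
      obtain ⟨ha1, hb1⟩ := mem_stepped hP1 <;>
      obtain ⟨ha2, hb2⟩ := mem_stepped hP2 <;>
      simp only [mv1, e1, Pi.add_apply, Pi.sub_apply, Pi.zero_apply, Matrix.cons_val_zero,
        Matrix.cons_val_one, Matrix.head_cons, Matrix.cons_val_two, Matrix.tail_cons] at ha1 hb1 ha2 hb2 <;>
      push_cast at ha1 hb1 ha2 hb2 <;>
      first
        | linarith
        | exact h {((0:Z3), (0:Fin 3)), (![0,0,1], 0)} (by simp [Forbidden]) ((Mmat 1)ᵀ *ᵥ t) (by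
            intro f hf
            simp only [translatePat, Set.mem_image, Set.mem_insert_iff,
              Set.mem_singleton_iff] at hf
            obtain ⟨g, hg | hg, rfl⟩ := hf <;> subst hg <;>
              refine mem_stepped' ?_ ?_ <;>
              simp only [mv1, e1, Pi.add_apply, Pi.sub_apply, Pi.zero_apply, Matrix.cons_val_zero,
        Matrix.cons_val_one, Matrix.head_cons, Matrix.cons_val_two, Matrix.tail_cons] <;>
              push_cast <;> linarith)
  · have hA : ∀ d : Z3, ∀ s : Fin 3,
        ((d, s) : Face) ∈ ({((0:Z3), (1:Fin 3)), (![0,0,1], 1)} : Set Face) →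
        (d + t, s) ∈ dualPat 2 (stepped w) := fun d s hd => hsub ⟨(d, s), hd, rfl⟩
    obtain ⟨τ1, g1, hP1, hg1⟩ := decode (hA 0 1 (Set.mem_insert _ _))
    obtain ⟨τ2, g2, hP2, hg2⟩ := decode (hA ![0,0,1] 1 (by simp))
    fin_cases τ1 <;> fin_cases τ2 <;>
      simp [dualBase, Uset, Prod.ext_iff] at hg1 hg2 <;>
      subst hg1 <;> subst hg2 <;>
      obtain ⟨ha1, hb1⟩ := mem_stepped hP1 <;>
      obtain ⟨ha2, hb2⟩ := mem_stepped hP2 <;>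
      simp only [mv2, e1, Pi.add_apply, Pi.sub_apply, Pi.zero_apply, Matrix.cons_val_zero,
        Matrix.cons_val_one, Matrix.head_cons, Matrix.cons_val_two, Matrix.tail_cons] at ha1 hb1 ha2 hb2 <;>
      push_cast at ha1 hb1 ha2 hb2 <;>
      first
        | linarith
        | exact h {((0:Z3), (0:Fin 3)), (![0,1,0], 0)} (by simp [Forbidden]) ((Mmat 2)ᵀ *ᵥ t) (by
            intro f hf
            simp only [translatePat, Set.mem_image, Set.mem_insert_iff,
              Set.mem_singleton_iff] at hf
            obtain ⟨g, hg | hg, rfl⟩ := hf <;> subst hg <;>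
              refine mem_stepped' ?_ ?_ <;>
              simp only [mv2, e1, Pi.add_apply, Pi.sub_apply, Pi.zero_apply, Matrix.cons_val_zero,
        Matrix.cons_val_one, Matrix.head_cons, Matrix.cons_val_two, Matrix.tail_cons] <;>
              push_cast <;> linarith)
  · have hA : ∀ d : Z3, ∀ s : Fin 3,
        ((d, s) : Face) ∈ ({((0:Z3), (2:Fin 3)), (![1,1,0], 2)} : Set Face) →
        (d + t, s) ∈ dualPat 0 (stepped w) := fun d s hd => hsub ⟨(d, s), hd, rfl⟩
    obtain ⟨τ1, g1, hP1, hg1⟩ := decode (hA 0 2 (Set.mem_insert _ _))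
    obtain ⟨τ2, g2, hP2, hg2⟩ := decode (hA ![1,1,0] 2 (by simp))
    fin_cases τ1 <;> fin_cases τ2 <;>
      simp [dualBase, Uset, Prod.ext_iff] at hg1 hg2 <;>
      subst hg1 <;> subst hg2 <;>
      obtain ⟨ha1, hb1⟩ := mem_stepped hP1 <;>
      obtain ⟨ha2, hb2⟩ := mem_stepped hP2 <;>
      simp only [mv0, e1, Pi.add_apply, Pi.sub_apply, Pi.zero_apply, Matrix.cons_val_zero,
        Matrix.cons_val_one, Matrix.head_cons, Matrix.cons_val_two, Matrix.tail_cons] at ha1 hb1 ha2 hb2 <;>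
      push_cast at ha1 hb1 ha2 hb2 <;>
      first
        | linarith
        | exact h {((0:Z3), (2:Fin 3)), (![1,1,0], 2)} (by simp [Forbidden]) ((Mmat 0)ᵀ *ᵥ t) (by
            intro f hf
            simp only [translatePat, Set.mem_image, Set.mem_insert_iff,
              Set.mem_singleton_iff] at hf
            obtain ⟨g, hg | hg, rfl⟩ := hf <;> subst hg <;>
              refine mem_stepped' ?_ ?_ <;>
              simp only [mv0, e1, Pi.add_apply, Pi.sub_apply, Pi.zero_apply, Matrix.cons_val_zero,
        Matrix.cons_val_one, Matrix.head_cons, Matrix.cons_val_two, Matrix.tail_cons] <;>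
              push_cast <;> linarith)
  · have hA : ∀ d : Z3, ∀ s : Fin 3,
        ((d, s) : Face) ∈ ({((0:Z3), (2:Fin 3)), (![1,1,0], 2)} : Set Face) →
        (d + t, s) ∈ dualPat 1 (stepped w) := fun d s hd => hsub ⟨(d, s), hd, rfl⟩
    obtain ⟨τ1, g1, hP1, hg1⟩ := decode (hA 0 2 (Set.mem_insert _ _))
    obtain ⟨τ2, g2, hP2, hg2⟩ := decode (hA ![1,1,0] 2 (by simp))
    fin_cases τ1 <;> fin_cases τ2 <;>
      simp [dualBase, Uset, Prod.ext_iff] at hg1 hg2 <;>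
      subst hg1 <;> subst hg2 <;>
      obtain ⟨ha1, hb1⟩ := mem_stepped hP1 <;>
      obtain ⟨ha2, hb2⟩ := mem_stepped hP2 <;>
      simp only [mv1, e1, Pi.add_apply, Pi.sub_apply, Pi.zero_apply, Matrix.cons_val_zero,
        Matrix.cons_val_one, Matrix.head_cons, Matrix.cons_val_two, Matrix.tail_cons] at ha1 hb1 ha2 hb2 <;>
      push_cast at ha1 hb1 ha2 hb2 <;>
      first
        | linarith
        | exact h {((0:Z3), (2:Fin 3)), (![1,1,0], 2)} (by simp [Forbidden]) ((Mmat 1)ᵀ *ᵥ t) (by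
            intro f hf
            simp only [translatePat, Set.mem_image, Set.mem_insert_iff,
              Set.mem_singleton_iff] at hf
            obtain ⟨g, hg | hg, rfl⟩ := hf <;> subst hg <;>
              refine mem_stepped' ?_ ?_ <;>
              simp only [mv1, e1, Pi.add_apply, Pi.sub_apply, Pi.zero_apply, Matrix.cons_val_zero,
        Matrix.cons_val_one, Matrix.head_cons, Matrix.cons_val_two, Matrix.tail_cons] <;>
              push_cast <;> linarith)
  · have hA : ∀ d : Z3, ∀ s : Fin 3,
        ((d, s) : Face) ∈ ({((0:Z3), (2:Fin 3)), (![1,1,0], 2)} : Set Face) →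
        (d + t, s) ∈ dualPat 2 (stepped w) := fun d s hd => hsub ⟨(d, s), hd, rfl⟩
    obtain ⟨τ1, g1, hP1, hg1⟩ := decode (hA 0 2 (Set.mem_insert _ _))
    obtain ⟨τ2, g2, hP2, hg2⟩ := decode (hA ![1,1,0] 2 (by simp))
    fin_cases τ1 <;> fin_cases τ2 <;>
      simp [dualBase, Uset, Prod.ext_iff] at hg1 hg2 <;>
      subst hg1 <;> subst hg2 <;>
      obtain ⟨ha1, hb1⟩ := mem_stepped hP1 <;>
      obtain ⟨ha2, hb2⟩ := mem_stepped hP2 <;>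
      simp only [mv2, e1, Pi.add_apply, Pi.sub_apply, Pi.zero_apply, Matrix.cons_val_zero,
        Matrix.cons_val_one, Matrix.head_cons, Matrix.cons_val_two, Matrix.tail_cons] at ha1 hb1 ha2 hb2 <;>
      push_cast at ha1 hb1 ha2 hb2 <;>
      first
        | linarith
        | exact h {((0:Z3), (1:Fin 3)), (![0,0,1], 1)} (by simp [Forbidden]) ((Mmat 2)ᵀ *ᵥ t + e1) (by
            intro f hf
            simp only [translatePat, Set.mem_image, Set.mem_insert_iff,
              Set.mem_singleton_iff] at hf
            obtain ⟨g, hg | hg, rfl⟩ := hf <;> subst hg <;>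
              refine mem_stepped' ?_ ?_ <;>
              simp only [mv2, e1, Pi.add_apply, Pi.sub_apply, Pi.zero_apply, Matrix.cons_val_zero,
        Matrix.cons_val_one, Matrix.head_cons, Matrix.cons_val_two, Matrix.tail_cons] <;>
              push_cast <;> linarith)
end
end

section
/- Let Γ be a stepped plane that contains no translate of any of the four forbidden patterns, let P ⊆ Γ be a pattern, and let A ⊆ Γ be an L_FS-annulus of P in Γ. Then for every i ∈ {1,2,3}, Σᵢ(A) is an L_FS-annulus of Σᵢ(P) in the stepped plane Σᵢ(Γ). -/
open Matrix
open scoped Classical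

noncomputable section

-- ===== auxiliary development =====
namespace AnnAux

lemma z3ext {x y : Z3} (h0 : x 0 = y 0) (h1 : x 1 = y 1) (h2 : x 2 = y 2) : x = y := by
  funext j; fin_cases j <;> assumption

/-- explicit inverse transpose matrices -/
def Nmat : Fin 3 → Matrix (Fin 3) (Fin 3) ℤ :=
  ![!![1,-1,-1;0,1,0;0,0,1], !![-1,1,-1;1,0,0;0,0,1], !![-1,-1,1;1,0,0;0,1,0]]

lemma Nmat_eq (i : Fin 3) : ((Mmat i)ᵀ)⁻¹ = Nmat i := by
  apply Matrix.inv_eq_right_inv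
  fin_cases i <;>
    · ext j k
      fin_cases j <;> fin_cases k <;>
        simp [Mmat, Nmat, Matrix.mul_apply, Fin.sum_univ_three, Matrix.transpose,
          Matrix.one_apply] <;> decide

/-- the inverse transpose as an explicit function -/
def Nfun (i : Fin 3) (x : Z3) : Z3 :=
  if i = 0 then ![x 0 - x 1 - x 2, x 1, x 2]
  else if i = 1 then ![x 1 - x 0 - x 2, x 0, x 2]
  else ![x 2 - x 0 - x 1, x 0, x 1]

/-- the transpose matrix as an explicit function -/
def Mtfun (i : Fin 3) (x : Z3) : Z3 :=
  if i = 0 then ![x 0 + x 1 + x 2, x 1, x 2]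
  else if i = 1 then ![x 1, x 0 + x 1 + x 2, x 2]
  else ![x 1, x 2, x 0 + x 1 + x 2]

lemma mulVec_inv (i : Fin 3) (x : Z3) : ((Mmat i)ᵀ)⁻¹ *ᵥ x = Nfun i x := by
  rw [Nmat_eq]
  fin_cases i <;>
    · refine z3ext ?_ ?_ ?_ <;>
        simp [Nmat, Nfun, Matrix.mulVec, dotProduct, Fin.sum_univ_three] <;> ring

lemma Nfun_Mtfun (i : Fin 3) (x : Z3) : Nfun i (Mtfun i x) = x := by
  fin_cases i <;>
    · refine z3ext ?_ ?_ ?_ <;> simp [Nfun, Mtfun] <;> ring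

lemma Mtfun_Nfun (i : Fin 3) (x : Z3) : Mtfun i (Nfun i x) = x := by
  fin_cases i <;>
    · refine z3ext ?_ ?_ ?_ <;> simp [Nfun, Mtfun] <;> ring

lemma Nfun_add (i : Fin 3) (x y : Z3) : Nfun i (x + y) = Nfun i x + Nfun i y := by
  fin_cases i <;>
    · refine z3ext ?_ ?_ ?_ <;> simp [Nfun] <;> ring

lemma Nfun_inj (i : Fin 3) {x y : Z3} (h : Nfun i x = Nfun i y) : x = y := by
  have := congrArg (Mtfun i) h
  rwa [Mtfun_Nfun, Mtfun_Nfun] at this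

end AnnAux
namespace AnnAux

/-- the type that maps to `(e1,1)` under `Σᵢ` -/
def oth1 : Fin 3 → Fin 3 := ![1, 0, 0]
/-- the type that maps to `(e1,2)` under `Σᵢ` -/
def oth2 : Fin 3 → Fin 3 := ![2, 2, 1]

lemma dualBase_main (i : Fin 3) : dualBase i i = Uset := by
  simp [dualBase]

lemma dualBase_oth1 (i : Fin 3) : dualBase i (oth1 i) = {(e1, 1)} := by
  fin_cases i <;> simp [dualBase, oth1] <;> decide

lemma dualBase_oth2 (i : Fin 3) : dualBase i (oth2 i) = {(e1, 2)} := by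
  fin_cases i <;> simp [dualBase, oth2] <;> decide

lemma types_cover (i τ : Fin 3) : τ = i ∨ τ = oth1 i ∨ τ = oth2 i := by
  fin_cases i <;> fin_cases τ <;> simp [oth1, oth2] <;> decide

lemma oth1_ne (i : Fin 3) : oth1 i ≠ i := by fin_cases i <;> decide
lemma oth2_ne (i : Fin 3) : oth2 i ≠ i := by fin_cases i <;> decide
lemma oth1_ne_oth2 (i : Fin 3) : oth1 i ≠ oth2 i := by fin_cases i <;> decide

lemma dualFace_main (i : Fin 3) (x : Z3) :
    dualFace i (x, i) = {(Nfun i x, 0), (Nfun i x, 1), (Nfun i x, 2)} := by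
  simp only [dualFace, dualBase_main, Uset, mulVec_inv]
  ext g
  simp [Set.image_insert_eq]

lemma dualFace_oth1 (i : Fin 3) (x : Z3) :
    dualFace i (x, oth1 i) = {(Nfun i x + e1, 1)} := by
  simp only [dualFace, dualBase_oth1, mulVec_inv]
  ext g
  simp

lemma dualFace_oth2 (i : Fin 3) (x : Z3) :
    dualFace i (x, oth2 i) = {(Nfun i x + e1, 2)} := by
  simp only [dualFace, dualBase_oth2, mulVec_inv]
  ext g
  simp

lemma mem_dualPat {i : Fin 3} {S : Set Face} {g : Face} :
    g ∈ dualPat i S ↔ ∃ f ∈ S, g ∈ dualFace i f := by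
  simp [dualPat]

lemma dualPat_mono {i : Fin 3} {S T : Set Face} (h : S ⊆ T) : dualPat i S ⊆ dualPat i T := by
  intro g hg
  rcases mem_dualPat.1 hg with ⟨f, hf, hgf⟩
  exact mem_dualPat.2 ⟨f, h hf, hgf⟩

lemma dualPat_union (i : Fin 3) (S T : Set Face) :
    dualPat i (S ∪ T) = dualPat i S ∪ dualPat i T := by
  ext g; simp only [dualPat, Set.mem_iUnion, Set.mem_union, exists_prop]
  constructor
  · rintro ⟨f, hf | hf, hg⟩
    · exact Or.inl ⟨f, hf, hg⟩
    · exact Or.inr ⟨f, hf, hg⟩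
  · rintro (⟨f, hf, hg⟩ | ⟨f, hf, hg⟩)
    · exact ⟨f, Or.inl hf, hg⟩
    · exact ⟨f, Or.inr hf, hg⟩

/-- parent extraction -/
lemma parent_of_mem {i : Fin 3} {S : Set Face} {y : Z3} {c : Fin 3}
    (h : (y, c) ∈ dualPat i S) :
    ∃ x τ, (x, τ) ∈ S ∧
      ((τ = i ∧ y = Nfun i x) ∨
       (τ = oth1 i ∧ c = 1 ∧ y = Nfun i x + e1) ∨
       (τ = oth2 i ∧ c = 2 ∧ y = Nfun i x + e1)) := by
  rcases mem_dualPat.1 h with ⟨⟨x, τ⟩, hf, hg⟩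
  refine ⟨x, τ, hf, ?_⟩
  rcases types_cover i τ with hτ | hτ | hτ <;> subst hτ
  · rw [dualFace_main] at hg
    simp only [Set.mem_insert_iff, Set.mem_singleton_iff, Prod.mk.injEq] at hg
    exact Or.inl ⟨rfl, by tauto⟩
  · rw [dualFace_oth1] at hg
    simp only [Set.mem_singleton_iff, Prod.mk.injEq] at hg
    exact Or.inr (Or.inl ⟨rfl, hg.2.symm ▸ rfl, hg.1⟩)
  · rw [dualFace_oth2] at hg
    simp only [Set.mem_singleton_iff, Prod.mk.injEq] at hg
    exact Or.inr (Or.inr ⟨rfl, hg.2 ▸ rfl, hg.1⟩)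

lemma dualFace_translate (i : Fin 3) (x t : Z3) (τ : Fin 3) :
    dualFace i (x + t, τ) = translatePat (Nfun i t) (dualFace i (x, τ)) := by
  simp only [dualFace, translatePat, Set.image_image]
  apply Set.image_congr'
  intro g
  simp only [mulVec_inv, Nfun_add, Prod.mk.injEq]
  exact ⟨by abel, trivial⟩

lemma dualPat_translate (i : Fin 3) (t : Z3) (P : Set Face) :
    dualPat i (translatePat t P) = translatePat (Nfun i t) (dualPat i P) := by
  ext g
  constructor
  · intro hg
    rcases mem_dualPat.1 hg with ⟨f, hf, hgf⟩
    rcases hf with ⟨f0, hf0, rfl⟩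
    rw [show ((fun f : Face => (f.1 + t, f.2)) f0) = (f0.1 + t, f0.2) from rfl,
      dualFace_translate] at hgf
    rcases hgf with ⟨g0, hg0, rfl⟩
    exact ⟨g0, mem_dualPat.2 ⟨(f0.1, f0.2), hf0, hg0⟩, rfl⟩
  · rintro ⟨g0, hg0, rfl⟩
    rcases mem_dualPat.1 hg0 with ⟨⟨x, τ⟩, hf, hgf⟩
    have : (g0.1 + Nfun i t, g0.2) ∈ dualFace i (x + t, τ) := by
      rw [dualFace_translate]
      exact ⟨g0, hgf, rfl⟩
    exact mem_dualPat.2 ⟨(x + t, τ), ⟨(x, τ), hf, rfl⟩, this⟩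

end AnnAux
namespace AnnAux

lemma dot3_explicit (x : Z3) (w : R3) :
    dot3 x w = (x 0 : ℝ) * w 0 + (x 1 : ℝ) * w 1 + (x 2 : ℝ) * w 2 := by
  simp [dot3, Fin.sum_univ_three]

lemma dot3_add (x y : Z3) (w : R3) : dot3 (x + y) w = dot3 x w + dot3 y w := by
  simp only [dot3_explicit, Pi.add_apply]
  push_cast
  ring

lemma mem_stepped {w : R3} {x : Z3} {τ : Fin 3} :
    (x, τ) ∈ stepped w ↔ 0 ≤ dot3 x w ∧ dot3 x w < w τ := Iff.rfl

/-- the ordering conditions on `w` forced by avoiding the forbidden patterns -/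
def WOrd (w : R3) : Prop := 0 ≤ w 0 ∧ w 0 ≤ w 1 ∧ w 1 ≤ w 2 ∧ w 2 ≤ w 0 + w 1

lemma translatePat_zero (P : Set Face) : translatePat 0 P = P := by
  have : (fun f : Face => (f.1 + 0, f.2)) = id := by
    funext f; simp
  simp [translatePat, this]

lemma word_of_avoid {w : R3} (hw : ∀ i, 0 ≤ w i)
    (havoid : ∀ X ∈ Forbidden, ∀ t : Z3, ¬ translatePat t X ⊆ stepped w) : WOrd w := by
  have e0 : dot3 (0 : Z3) w = 0 := by simp [dot3_explicit]
  have e1' : dot3 ![0,1,0] w = w 1 := by simp [dot3_explicit]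
  have e2' : dot3 ![0,0,1] w = w 2 := by simp [dot3_explicit]
  have e3' : dot3 ![1,1,0] w = w 0 + w 1 := by simp [dot3_explicit]
  have h01 : w 0 ≤ w 1 := by
    by_contra hlt
    push_neg at hlt
    refine havoid {(0, 0), (![0,1,0], 0)} (by simp [Forbidden]) 0 ?_
    rw [translatePat_zero]
    intro g hg
    simp only [Set.mem_insert_iff, Set.mem_singleton_iff] at hg
    rcases hg with rfl | rfl <;> show stepped w _
    · exact ⟨by simp [e0], by simp [e0]; linarith [hw 1]⟩
    · exact ⟨by simp [e1']; exact hw 1, by simp [e1']; linarith⟩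
  have h12 : w 1 ≤ w 2 := by
    by_contra hlt
    push_neg at hlt
    refine havoid {(0, 1), (![0,0,1], 1)} (by simp [Forbidden]) 0 ?_
    rw [translatePat_zero]
    intro g hg
    simp only [Set.mem_insert_iff, Set.mem_singleton_iff] at hg
    rcases hg with rfl | rfl <;> show stepped w _
    · exact ⟨by simp [e0], by simp [e0]; linarith [hw 2]⟩
    · exact ⟨by simp [e2']; exact hw 2, by simp [e2']; linarith⟩
  have h2 : w 2 ≤ w 0 + w 1 := by
    by_contra hlt
    push_neg at hlt
    refine havoid {(0, 2), (![1,1,0], 2)} (by simp [Forbidden]) 0 ?_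
    rw [translatePat_zero]
    intro g hg
    simp only [Set.mem_insert_iff, Set.mem_singleton_iff] at hg
    rcases hg with rfl | rfl <;> show stepped w _
    · exact ⟨by simp [e0], by simp [e0]; linarith [hw 0, hw 1]⟩
    · exact ⟨by simp [e3']; linarith [hw 0, hw 1], by simp [e3']; linarith⟩
  exact ⟨hw 0, h01, h12, h2⟩

/-- integer dot product -/
def idot (x y : Z3) : ℤ := x 0 * y 0 + x 1 * y 1 + x 2 * y 2

def unit3 : Fin 3 → Z3 := ![![1,0,0], ![0,1,0], ![0,0,1]]

lemma dot3_unit (c : Fin 3) (w : R3) : dot3 (unit3 c) w = w c := by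
  fin_cases c <;> simp [unit3, dot3_explicit]

/-- certificate that `⟨δ, w⟩ ≥ 0` for every `w` satisfying `WOrd` -/
def NNCert (δ : Z3) : Prop :=
  0 ≤ idot δ ![0,1,1] ∧ 0 ≤ idot δ ![1,1,1] ∧ 0 ≤ idot δ ![1,1,2]

instance (δ : Z3) : Decidable (NNCert δ) := by unfold NNCert; infer_instance

lemma dot3_nonneg_of_cert {w : R3} (hw : WOrd w) {δ : Z3} (hc : NNCert δ) :
    0 ≤ dot3 δ w := by
  obtain ⟨hw0, h01, h12, h2⟩ := hw
  obtain ⟨c1, c2, c3⟩ := hc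
  have key : dot3 δ w =
      (w 1 - w 0) * (idot δ ![0,1,1] : ℝ) + (w 0 + w 1 - w 2) * (idot δ ![1,1,1] : ℝ)
        + (w 2 - w 1) * (idot δ ![1,1,2] : ℝ) := by
    simp only [dot3_explicit, idot]
    push_cast
    simp
    ring
  rw [key]
  have i1 : (0:ℝ) ≤ (idot δ ![0,1,1] : ℝ) := by exact_mod_cast c1
  have i2 : (0:ℝ) ≤ (idot δ ![1,1,1] : ℝ) := by exact_mod_cast c2
  have i3 : (0:ℝ) ≤ (idot δ ![1,1,2] : ℝ) := by exact_mod_cast c3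
  have := mul_nonneg (by linarith : (0:ℝ) ≤ w 1 - w 0) i1
  have := mul_nonneg (by linarith : (0:ℝ) ≤ w 0 + w 1 - w 2) i2
  have := mul_nonneg (by linarith : (0:ℝ) ≤ w 2 - w 1) i3
  linarith

/-- certificate that two faces at relative position `δ` and of types `τ, τ'`
cannot both lie in a stepped plane with ordered normal -/
def Cert (δ : Z3) (τ τ' : Fin 3) : Prop :=
  NNCert (δ - unit3 τ') ∨ NNCert (-δ - unit3 τ)

instance (δ : Z3) (τ τ' : Fin 3) : Decidable (Cert δ τ τ') := by
  unfold Cert; infer_instance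

lemma dot3_sub (x y : Z3) (w : R3) : dot3 (x - y) w = dot3 x w - dot3 y w := by
  simp only [dot3_explicit, Pi.sub_apply]
  push_cast
  ring

lemma dot3_neg (x : Z3) (w : R3) : dot3 (-x) w = - dot3 x w := by
  simp only [dot3_explicit, Pi.neg_apply]
  push_cast
  ring

lemma stepped_contra {w : R3} (hw : WOrd w) {x : Z3} {τ τ' : Fin 3} (δ : Z3)
    (h1 : (x, τ) ∈ stepped w) (h2 : (x + δ, τ') ∈ stepped w) (hc : Cert δ τ τ') : False := by
  obtain ⟨s1, s2⟩ := mem_stepped.1 h1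
  obtain ⟨t1, t2⟩ := mem_stepped.1 h2
  rw [dot3_add] at t1 t2
  rcases hc with hc | hc
  · have := dot3_nonneg_of_cert hw hc
    rw [dot3_sub, dot3_unit] at this
    linarith
  · have := dot3_nonneg_of_cert hw hc
    rw [dot3_sub, dot3_neg, dot3_unit] at this
    linarith

/-- derive parent translation from child relation -/
lemma shift_of {i : Fin 3} {x y d : Z3} (h : Nfun i y = Nfun i x + d) :
    y = x + Mtfun i d := by
  apply Nfun_inj i
  rw [Nfun_add, Nfun_Mtfun, h]

end AnnAux
namespace AnnAux

lemma forb_contra {w : R3}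
    (havoid : ∀ X ∈ Forbidden, ∀ t : Z3, ¬ translatePat t X ⊆ stepped w)
    {x δ : Z3} {c : Fin 3} (hX : ({((0:Z3), c), (δ, c)} : Set Face) ∈ Forbidden)
    (h1 : (x, c) ∈ stepped w) (h2 : (x + δ, c) ∈ stepped w) : False := by
  refine havoid _ hX x ?_
  intro g hg
  rcases hg with ⟨f, hf, rfl⟩
  simp only [Set.mem_insert_iff, Set.mem_singleton_iff] at hf
  rcases hf with rfl | rfl
  · simpa using h1
  · simpa [add_comm] using h2

lemma mem_main_fst {i : Fin 3} {x : Z3} {g : Face} (hg : g ∈ dualFace i (x, i)) :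
    g.1 = Nfun i x := by
  rw [dualFace_main] at hg
  rcases hg with rfl | rfl | rfl <;> rfl

lemma mem_oth1_eq {i : Fin 3} {x : Z3} {g : Face} (hg : g ∈ dualFace i (x, oth1 i)) :
    g = (Nfun i x + e1, 1) := by
  rw [dualFace_oth1] at hg
  exact hg

lemma mem_oth2_eq {i : Fin 3} {x : Z3} {g : Face} (hg : g ∈ dualFace i (x, oth2 i)) :
    g = (Nfun i x + e1, 2) := by
  rw [dualFace_oth2] at hg
  exact hg

lemma e1_eq_unit : e1 = unit3 0 := by decide

lemma cert_main_oth (i : Fin 3) : Cert (Mtfun i e1) (oth1 i) i ∧ Cert (Mtfun i e1) (oth2 i) i := by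
  fin_cases i <;> exact ⟨Or.inl (by decide), Or.inl (by decide)⟩

/-- distinct faces of a stepped plane have disjoint images -/
lemma parent_unique {w : R3} (hw : WOrd w) {i : Fin 3} {f f' : Face}
    (hf : f ∈ stepped w) (hf' : f' ∈ stepped w) {g : Face}
    (hg : g ∈ dualFace i f) (hg' : g ∈ dualFace i f') : f = f' := by
  obtain ⟨x, τ⟩ := f
  obtain ⟨x', τ'⟩ := f'
  have main_oth1 : ∀ x x' : Z3, (x, i) ∈ stepped w → (x', oth1 i) ∈ stepped w →
      g ∈ dualFace i (x, i) → g ∈ dualFace i (x', oth1 i) → False := by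
    intro x x' h1 h2 hg1 hg2
    have e1' := mem_main_fst hg1
    have e2' := mem_oth1_eq hg2
    have : Nfun i x = Nfun i x' + e1 := by rw [← e1', e2']
    have hx : x = x' + Mtfun i e1 := shift_of this
    exact stepped_contra hw (Mtfun i e1) h2 (hx ▸ h1) (cert_main_oth i).1
  have main_oth2 : ∀ x x' : Z3, (x, i) ∈ stepped w → (x', oth2 i) ∈ stepped w →
      g ∈ dualFace i (x, i) → g ∈ dualFace i (x', oth2 i) → False := by
    intro x x' h1 h2 hg1 hg2
    have e1' := mem_main_fst hg1
    have e2' := mem_oth2_eq hg2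
    have : Nfun i x = Nfun i x' + e1 := by rw [← e1', e2']
    have hx : x = x' + Mtfun i e1 := shift_of this
    exact stepped_contra hw (Mtfun i e1) h2 (hx ▸ h1) (cert_main_oth i).2
  rcases types_cover i τ with h | h | h <;> rw [h] at hg hf <;>
    rcases types_cover i τ' with h' | h' | h' <;> rw [h'] at hg' hf'
  · have h1 := mem_main_fst hg
    have h2 := mem_main_fst hg'
    have hx : x = x' := Nfun_inj i (by rw [← h1, h2])
    exact Prod.ext hx (h.trans h'.symm)
  · exact absurd (main_oth1 x x' hf hf' hg hg') not_false
  · exact absurd (main_oth2 x x' hf hf' hg hg') not_false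
  · exact absurd (main_oth1 x' x hf' hf hg' hg) not_false
  · have h1 := mem_oth1_eq hg
    have h2 := mem_oth1_eq hg'
    rw [h1] at h2
    have hx : x = x' := Nfun_inj i (by
      have := congrArg Prod.fst h2
      simpa using this)
    exact Prod.ext hx (h.trans h'.symm)
  · have h1 := mem_oth1_eq hg
    have h2 := mem_oth2_eq hg'
    rw [h1] at h2
    have : (1 : Fin 3) = 2 := congrArg Prod.snd h2
    exact absurd this (by decide)
  · exact absurd (main_oth2 x' x hf' hf hg' hg) not_false
  · have h1 := mem_oth2_eq hg
    have h2 := mem_oth1_eq hg'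
    rw [h1] at h2
    have : (2 : Fin 3) = 1 := congrArg Prod.snd h2
    exact absurd this (by decide)
  · have h1 := mem_oth2_eq hg
    have h2 := mem_oth2_eq hg'
    rw [h1] at h2
    have hx : x = x' := Nfun_inj i (by
      have := congrArg Prod.fst h2
      simpa using this)
    exact Prod.ext hx (h.trans h'.symm)

/-- image of a set difference under the dual substitution, within the stepped plane -/
lemma dualPat_inter_empty {w : R3} (hw : WOrd w) (i : Fin 3) {S T : Set Face}
    (hS : S ⊆ stepped w) (hT : T ⊆ stepped w) (hST : S ∩ T = ∅) :
    dualPat i S ∩ dualPat i T = ∅ := by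
  ext g
  simp only [Set.mem_inter_iff, Set.mem_empty_iff_false, iff_false]
  rintro ⟨hgS, hgT⟩
  rcases mem_dualPat.1 hgS with ⟨f, hf, hgf⟩
  rcases mem_dualPat.1 hgT with ⟨f', hf', hgf'⟩
  have : f = f' := parent_unique hw (hS hf) (hT hf') hgf hgf'
  subst this
  have hmem : f ∈ S ∩ T := ⟨hf, hf'⟩
  rw [hST] at hmem
  exact hmem

lemma dualPat_diff {w : R3} (hw : WOrd w) (i : Fin 3) {S : Set Face}
    (hS : S ⊆ stepped w) :
    dualPat i (stepped w) \ dualPat i S = dualPat i (stepped w \ S) := by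
  ext g
  constructor
  · rintro ⟨hgΓ, hgS⟩
    rcases mem_dualPat.1 hgΓ with ⟨f, hf, hgf⟩
    refine mem_dualPat.2 ⟨f, ⟨hf, fun hfS => hgS (mem_dualPat.2 ⟨f, hfS, hgf⟩)⟩, hgf⟩
  · intro hg
    rcases mem_dualPat.1 hg with ⟨f, ⟨hfΓ, hfS⟩, hgf⟩
    refine ⟨mem_dualPat.2 ⟨f, hfΓ, hgf⟩, fun hgS => ?_⟩
    rcases mem_dualPat.1 hgS with ⟨f', hf', hgf'⟩
    exact hfS ((parent_unique hw hfΓ (hS hf') hgf hgf') ▸ hf')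

end AnnAux
namespace AnnAux

/-- a translate of an `L_FS` element contained in `P` -/
def good (P Q : Set Face) : Prop :=
  (∃ R ∈ LFS, ∃ t : Z3, Q = translatePat t R) ∧ Q ⊆ P

/-- two faces contained in a common good set -/
def link (P : Set Face) (a b : Face) : Prop := ∃ Q, good P Q ∧ a ∈ Q ∧ b ∈ Q

lemma link_symm {P : Set Face} : Symmetric (link P) := by
  rintro a b ⟨Q, hQ, ha, hb⟩
  exact ⟨Q, hQ, hb, ha⟩

lemma link_mono {P P' : Set Face} (h : P ⊆ P') {a b : Face} (hl : link P a b) :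
    link P' a b := by
  rcases hl with ⟨Q, ⟨hQ1, hQ2⟩, ha, hb⟩
  exact ⟨Q, ⟨hQ1, hQ2.trans h⟩, ha, hb⟩

lemma rtg_link_mono {P P' : Set Face} (h : P ⊆ P') {a b : Face}
    (hl : Relation.ReflTransGen (link P) a b) : Relation.ReflTransGen (link P') a b :=
  Relation.ReflTransGen.mono (fun _ _ hab => link_mono h hab) _ _ hl

lemma translatePat_comp (s t : Z3) (P : Set Face) :
    translatePat s (translatePat t P) = translatePat (t + s) P := by
  simp only [translatePat, Set.image_image]
  apply Set.image_congr'
  intro f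
  simp [add_assoc]

lemma translatePat_mono {P Q : Set Face} (s : Z3) (h : P ⊆ Q) :
    translatePat s P ⊆ translatePat s Q := Set.image_mono h

lemma good_translate {P Q : Set Face} (s : Z3) (h : good P Q) :
    good (translatePat s P) (translatePat s Q) := by
  obtain ⟨⟨R, hR, t, rfl⟩, hsub⟩ := h
  exact ⟨⟨R, hR, t + s, translatePat_comp s t R⟩, translatePat_mono s hsub⟩

lemma mem_translatePat {s : Z3} {P : Set Face} {a : Face} (ha : a ∈ P) :
    (a.1 + s, a.2) ∈ translatePat s P := ⟨a, ha, rfl⟩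

lemma link_translate {P : Set Face} (s : Z3) {a b : Face} (h : link P a b) :
    link (translatePat s P) (a.1 + s, a.2) (b.1 + s, b.2) := by
  rcases h with ⟨Q, hQ, ha, hb⟩
  exact ⟨translatePat s Q, good_translate s hQ, mem_translatePat ha, mem_translatePat hb⟩

lemma rtg_link_translate {P : Set Face} (s : Z3) {a b : Face}
    (h : Relation.ReflTransGen (link P) a b) :
    Relation.ReflTransGen (link (translatePat s P)) (a.1 + s, a.2) (b.1 + s, b.2) :=
  Relation.ReflTransGen.lift (fun f : Face => (f.1 + s, f.2))
    (fun _ _ hab => link_translate s hab) _ _ h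

/-- chains give connectivity -/
lemma chain_rtg {P : Set Face} : ∀ n (Q : Fin (n + 1) → Set Face),
    (∀ k, good P (Q k)) → (∀ k : Fin n, (Q k.castSucc ∩ Q k.succ).Nonempty) →
    ∀ {a b : Face}, a ∈ Q 0 → b ∈ Q (Fin.last n) → Relation.ReflTransGen (link P) a b := by
  intro n
  induction n with
  | zero =>
      intro Q hg _ a b ha hb
      exact Relation.ReflTransGen.single ⟨Q 0, hg 0, ha, hb⟩
  | succ m ih =>
      intro Q hg hover a b ha hb
      obtain ⟨c, hc1, hc2⟩ := hover (Fin.last m)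
      have step1 := ih (fun k => Q k.castSucc) (fun k => hg _)
        (fun k => by exact hover k.castSucc) ha hc1
      exact step1.tail ⟨Q (Fin.last (m + 1)), hg _, hc2, hb⟩

/-- extracting connectivity from a covering -/
lemma rtg_of_covered {P : Set Face} (h : IsCovered LFS P) :
    ∀ e ∈ P, ∀ f ∈ P, Relation.ReflTransGen (link P) e f := by
  intro e he f hf
  obtain ⟨n, Q, hgood, he0, hfl, hsub, hover⟩ := h e he f hf
  exact chain_rtg n Q (fun k => ⟨hgood k, hsub k⟩) hover he0 hfl

lemma covered_start {P : Set Face} (h : IsCovered LFS P) :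
    ∀ e ∈ P, ∃ Q, good P Q ∧ e ∈ Q := by
  intro e he
  obtain ⟨n, Q, hgood, he0, _, hsub, _⟩ := h e he e he
  exact ⟨Q 0, ⟨hgood 0, hsub 0⟩, he0⟩

/-- building a covering from connectivity -/
lemma covered_of_rtg {P : Set Face}
    (hstart : ∀ e ∈ P, ∃ Q, good P Q ∧ e ∈ Q)
    (hconn : ∀ e ∈ P, ∀ f ∈ P, Relation.ReflTransGen (link P) e f) :
    IsCovered LFS P := by
  intro e he f hf
  have key : ∀ g : Face, Relation.ReflTransGen (link P) e g →
      ∃ n : ℕ, ∃ Q : Fin (n + 1) → Set Face,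
        (∀ k, good P (Q k)) ∧ e ∈ Q 0 ∧ g ∈ Q (Fin.last n) ∧
        (∀ k : Fin n, (Q k.castSucc ∩ Q k.succ).Nonempty) := by
    intro g hg
    induction hg with
    | refl =>
        obtain ⟨Q, hQ, heQ⟩ := hstart e he
        exact ⟨0, fun _ => Q, fun _ => hQ, heQ, heQ, fun k => k.elim0⟩
    | tail hab hbc ih =>
        rename_i b c
        obtain ⟨n, Q, hgood, he0, hbl, hover⟩ := ih
        obtain ⟨Q', hQ', hbQ', hcQ'⟩ := hbc
        refine ⟨n + 1, Fin.snoc Q Q', ?_, ?_, ?_, ?_⟩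
        · intro k
          refine Fin.lastCases ?_ ?_ k
          · rw [Fin.snoc_last]; exact hQ'
          · intro j; rw [Fin.snoc_castSucc]; exact hgood j
        · have : (0 : Fin (n + 2)) = Fin.castSucc 0 := rfl
          rw [this, Fin.snoc_castSucc]; exact he0
        · rw [Fin.snoc_last]; exact hcQ'
        · intro k
          refine Fin.lastCases ?_ ?_ k
          · refine ⟨b, ?_, ?_⟩
            · have : (Fin.last n).castSucc = Fin.castSucc (Fin.last n) := rfl
              rw [this, Fin.snoc_castSucc]; exact hbl
            · have : (Fin.last n).succ = Fin.last (n + 1) := rfl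
              rw [this, Fin.snoc_last]; exact hbQ'
          · intro j
            obtain ⟨b', hb1, hb2⟩ := hover j
            refine ⟨b', ?_, ?_⟩
            · have : (j.castSucc).castSucc = Fin.castSucc j.castSucc := rfl
              rw [this, Fin.snoc_castSucc]; exact hb1
            · have : (j.castSucc).succ = Fin.castSucc j.succ := by
                exact (Fin.succ_castSucc j).symm ▸ rfl
              rw [this, Fin.snoc_castSucc]; exact hb2
  obtain ⟨n, Q, hg, h0, hl, hov⟩ := key f (hconn e he f hf)
  exact ⟨n, Q, fun k => (hg k).1, h0, hl, fun k => (hg k).2, hov⟩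

end AnnAux
namespace AnnAux

/-- pattern is locally well-covered -/
def LocalGood (W : Set Face) : Prop :=
  (∀ g ∈ W, ∃ Q, good W Q ∧ g ∈ Q) ∧
  ∀ g ∈ W, ∀ g' ∈ W, Relation.ReflTransGen (link W) g g'

def tset (l : List Face) : Set Face := {g | g ∈ l}

lemma mem_tset {l : List Face} {g : Face} : g ∈ tset l ↔ g ∈ l := Iff.rfl

lemma tset_nil : tset [] = ∅ := by ext g; simp [tset]

lemma tset_cons (a : Face) (l : List Face) : tset (a :: l) = insert a (tset l) := by
  ext g; simp [tset]

lemma tset_append (l₁ l₂ : List Face) : tset (l₁ ++ l₂) = tset l₁ ∪ tset l₂ := by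
  ext g; simp [tset]

/-- the nine `L_FS` patterns as lists -/
def lfsL : Fin 9 → List Face
  | 0 => [(0, 0), (0, 1)]
  | 1 => [(0, 0), (![-1,1,0], 1)]
  | 2 => [(0, 0), (0, 2)]
  | 3 => [(0, 0), (![-1,0,1], 2)]
  | 4 => [(0, 1), (0, 2)]
  | 5 => [(0, 1), (![0,-1,1], 2)]
  | 6 => [(0, 1), (![1,0,0], 1), (0, 2)]
  | 7 => [(0, 2), (![1,0,0], 2), (0, 1)]
  | 8 => [(0, 2), (![0,1,0], 2), (0, 0)]

lemma tset_pair (a b : Face) : tset [a, b] = {a, b} := by ext g; simp [tset]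

lemma tset_triple (a b c : Face) : tset [a, b, c] = {a, b, c} := by ext g; simp [tset]

lemma tset_lfsL_mem (j : Fin 9) : tset (lfsL j) ∈ LFS := by
  have l0 : tset (lfsL 0) ∈ LFS := by
    rw [show lfsL 0 = [(0, 0), (0, 1)] from rfl, tset_pair]; simp [LFS]
  have l1 : tset (lfsL 1) ∈ LFS := by
    rw [show lfsL 1 = [(0, 0), (![-1,1,0], 1)] from rfl, tset_pair]; simp [LFS]
  have l2 : tset (lfsL 2) ∈ LFS := by
    rw [show lfsL 2 = [(0, 0), (0, 2)] from rfl, tset_pair]; simp [LFS]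
  have l3 : tset (lfsL 3) ∈ LFS := by
    rw [show lfsL 3 = [(0, 0), (![-1,0,1], 2)] from rfl, tset_pair]; simp [LFS]
  have l4 : tset (lfsL 4) ∈ LFS := by
    rw [show lfsL 4 = [(0, 1), (0, 2)] from rfl, tset_pair]; simp [LFS]
  have l5 : tset (lfsL 5) ∈ LFS := by
    rw [show lfsL 5 = [(0, 1), (![0,-1,1], 2)] from rfl, tset_pair]; simp [LFS]
  have l6 : tset (lfsL 6) ∈ LFS := by
    rw [show lfsL 6 = [(0, 1), (![1,0,0], 1), (0, 2)] from rfl, tset_triple]; simp [LFS]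
  have l7 : tset (lfsL 7) ∈ LFS := by
    rw [show lfsL 7 = [(0, 2), (![1,0,0], 2), (0, 1)] from rfl, tset_triple]; simp [LFS]
  have l8 : tset (lfsL 8) ∈ LFS := by
    rw [show lfsL 8 = [(0, 2), (![0,1,0], 2), (0, 0)] from rfl, tset_triple]; simp [LFS]
  fin_cases j <;>
    (first | exact l0 | exact l1 | exact l2 | exact l3 | exact l4 | exact l5 | exact l6 | exact l7 | exact l8)

/-- children of a face as a list -/
def childrenL (i : Fin 3) (f : Face) : List Face :=
  if f.2 = i then [(Nfun i f.1, 0), (Nfun i f.1, 1), (Nfun i f.1, 2)]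
  else if f.2 = oth1 i then [(Nfun i f.1 + e1, 1)]
  else [(Nfun i f.1 + e1, 2)]

lemma dualFace_tset (i : Fin 3) (f : Face) : dualFace i f = tset (childrenL i f) := by
  obtain ⟨x, τ⟩ := f
  rcases types_cover i τ with rfl | rfl | rfl
  · rw [dualFace_main]
    ext g; simp [childrenL, tset]
  · rw [dualFace_oth1]
    ext g; simp [childrenL, tset, oth1_ne i]
  · rw [dualFace_oth2]
    ext g; simp [childrenL, tset, oth2_ne i, Ne.symm (oth1_ne_oth2 i)]

lemma dualPat_empty (i : Fin 3) : dualPat i ∅ = ∅ := by simp [dualPat]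

lemma dualPat_single (i : Fin 3) (a : Face) : dualPat i {a} = dualFace i a := by
  simp [dualPat]

lemma dualPat_insert (i : Fin 3) (a : Face) (S : Set Face) :
    dualPat i (insert a S) = dualFace i a ∪ dualPat i S := by
  ext g
  simp only [dualPat, Set.mem_iUnion, Set.mem_union, Set.mem_insert_iff, exists_prop]
  constructor
  · rintro ⟨f, rfl | hf, hg⟩
    · exact Or.inl hg
    · exact Or.inr ⟨f, hf, hg⟩
  · rintro (hg | ⟨f, hf, hg⟩)
    · exact ⟨a, Or.inl rfl, hg⟩
    · exact ⟨f, Or.inr hf, hg⟩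

lemma dualPat_tset (i : Fin 3) (l : List Face) :
    dualPat i (tset l) = tset (l.flatMap (childrenL i)) := by
  induction l with
  | nil =>
      rw [tset_nil, dualPat_empty]
      ext g; simp [tset]
  | cons a l ih =>
      rw [tset_cons, dualPat_insert, ih, dualFace_tset]
      ext g; simp [tset]

def transL (t : Z3) (l : List Face) : List Face := l.map fun f => (f.1 + t, f.2)

lemma translatePat_tset (t : Z3) (l : List Face) :
    translatePat t (tset l) = tset (transL t l) := by
  ext g
  simp [translatePat, tset, transL]

/-- all candidate good sets inside `LW` -/
def glists (LW : List Face) : List (List Face) :=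
  (((List.finRange 9).flatMap fun j =>
      LW.flatMap fun g => (lfsL j).map fun r => ((g.1 - r.1 : Z3), j)).dedup.filter
    fun tj => (transL tj.1 (lfsL tj.2)).all fun f => decide (f ∈ LW)).map
    fun tj => transL tj.1 (lfsL tj.2)

lemma glists_good {LW : List Face} {q : List Face} (hq : q ∈ glists LW) :
    good (tset LW) (tset q) := by
  rcases List.mem_map.1 hq with ⟨⟨t, j⟩, htj, rfl⟩
  rcases List.mem_filter.1 htj with ⟨_, hall⟩
  constructor
  · exact ⟨tset (lfsL j), tset_lfsL_mem j, t, (translatePat_tset t (lfsL j)).symm⟩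
  · intro g hg
    have := List.all_eq_true.1 hall g (mem_tset.1 hg)
    exact mem_tset.2 (of_decide_eq_true this)

def reachStep (all : List (List Face)) (reached : List (List Face)) : List (List Face) :=
  all.filter fun q => reached.any fun r => q.any fun a => decide (a ∈ r)

def reachedL (LW : List Face) (hub : Face) : List (List Face) :=
  (reachStep (glists LW))^[(glists LW).length]
    ((glists LW).filter fun q => decide (hub ∈ q))

lemma reach_sound {LW : List Face} {hub : Face} (n : ℕ) (s : List (List Face))
    (hs : ∀ q ∈ s, q ∈ glists LW ∧
      ∀ a ∈ q, Relation.ReflTransGen (link (tset LW)) a hub) :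
    ∀ q ∈ (reachStep (glists LW))^[n] s, q ∈ glists LW ∧
      ∀ a ∈ q, Relation.ReflTransGen (link (tset LW)) a hub := by
  induction n with
  | zero => exact hs
  | succ m ih =>
      rw [Function.iterate_succ_apply']
      intro q hq
      rcases List.mem_filter.1 hq with ⟨hqall, hany⟩
      refine ⟨hqall, ?_⟩
      rcases List.any_eq_true.1 hany with ⟨r, hr, hany2⟩
      rcases List.any_eq_true.1 hany2 with ⟨b, hbq, hbr⟩
      have hbr' : b ∈ r := of_decide_eq_true hbr
      obtain ⟨hrall, hrh⟩ := ih r hr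
      intro a ha
      have step1 : Relation.ReflTransGen (link (tset LW)) a b :=
        Relation.ReflTransGen.single ⟨tset q, glists_good hqall, ha, hbq⟩
      exact step1.trans (hrh b hbr')

def checkL : List Face → Bool
  | [] => true
  | hub :: rest =>
      (hub :: rest).all fun g => (reachedL (hub :: rest) hub).any fun q => decide (g ∈ q)

lemma localGood_of_check (LW : List Face) (h : checkL LW = true) : LocalGood (tset LW) := by
  match LW with
  | [] =>
      constructor
      · intro g hg; exact absurd (mem_tset.1 hg) (by simp)
      · intro g hg; exact absurd (mem_tset.1 hg) (by simp)
  | hub :: rest =>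
      have hstart : ∀ q ∈ (glists (hub :: rest)).filter fun q => decide (hub ∈ q),
          q ∈ glists (hub :: rest) ∧
          ∀ a ∈ q, Relation.ReflTransGen (link (tset (hub :: rest))) a hub := by
        intro q hq
        rcases List.mem_filter.1 hq with ⟨hq1, hq2⟩
        refine ⟨hq1, fun a ha => Relation.ReflTransGen.single
          ⟨tset q, glists_good hq1, ha, mem_tset.2 (of_decide_eq_true hq2)⟩⟩
      have hreach := reach_sound (LW := hub :: rest) (hub := hub)
        (glists (hub :: rest)).length _ hstart
      have hcov : ∀ g ∈ tset (hub :: rest), ∃ q ∈ reachedL (hub :: rest) hub, g ∈ q := by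
        intro g hg
        have := List.all_eq_true.1 h g (mem_tset.1 hg)
        rcases List.any_eq_true.1 this with ⟨q, hq, hgq⟩
        exact ⟨q, hq, of_decide_eq_true hgq⟩
      constructor
      · intro g hg
        obtain ⟨q, hq, hgq⟩ := hcov g hg
        exact ⟨tset q, glists_good (hreach q hq).1, hgq⟩
      · intro g hg g' hg'
        obtain ⟨q, hq, hgq⟩ := hcov g hg
        obtain ⟨q', hq', hgq'⟩ := hcov g' hg'
        have h1 := (hreach q hq).2 g hgq
        have h2 := (hreach q' hq').2 g' hgq'
        exact h1.trans (by
          haveI : Std.Symm (link (tset (hub :: rest))) := ⟨fun a b hab => link_symm hab⟩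
          exact Relation.ReflTransGen.symmetric.symm _ _ h2)

end AnnAux
namespace AnnAux

set_option maxRecDepth 40000 in
lemma local_all (i : Fin 3) (j : Fin 9) : LocalGood (dualPat i (tset (lfsL j))) := by
  rw [dualPat_tset]
  apply localGood_of_check
  fin_cases i <;> fin_cases j <;> decide

end AnnAux
namespace AnnAux

lemma lfs_list : ∀ R ∈ LFS, ∃ j : Fin 9, R = tset (lfsL j) := by
  intro R hR
  simp only [LFS, Set.mem_insert_iff, Set.mem_singleton_iff] at hR
  rcases hR with rfl | rfl | rfl | rfl | rfl | rfl | rfl | rfl | rfl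
  · exact ⟨0, by rw [show lfsL 0 = [(0, 0), (0, 1)] from rfl, tset_pair]⟩
  · exact ⟨1, by rw [show lfsL 1 = [(0, 0), (![-1,1,0], 1)] from rfl, tset_pair]⟩
  · exact ⟨2, by rw [show lfsL 2 = [(0, 0), (0, 2)] from rfl, tset_pair]⟩
  · exact ⟨3, by rw [show lfsL 3 = [(0, 0), (![-1,0,1], 2)] from rfl, tset_pair]⟩
  · exact ⟨4, by rw [show lfsL 4 = [(0, 1), (0, 2)] from rfl, tset_pair]⟩
  · exact ⟨5, by rw [show lfsL 5 = [(0, 1), (![0,-1,1], 2)] from rfl, tset_pair]⟩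
  · exact ⟨6, by rw [show lfsL 6 = [(0, 1), (![1,0,0], 1), (0, 2)] from rfl, tset_triple]⟩
  · exact ⟨7, by rw [show lfsL 7 = [(0, 2), (![1,0,0], 2), (0, 1)] from rfl, tset_triple]⟩
  · exact ⟨8, by rw [show lfsL 8 = [(0, 2), (![0,1,0], 2), (0, 0)] from rfl, tset_triple]⟩

lemma good_mono {W W' Q : Set Face} (h : good W Q) (hWW : W ⊆ W') : good W' Q :=
  ⟨h.1, h.2.trans hWW⟩

lemma localGood_translate {W : Set Face} (s : Z3) (h : LocalGood W) :
    LocalGood (translatePat s W) := by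
  obtain ⟨h1, h2⟩ := h
  constructor
  · rintro g ⟨g0, hg0, rfl⟩
    obtain ⟨Q, hQ, hgQ⟩ := h1 g0 hg0
    exact ⟨translatePat s Q, good_translate s hQ, mem_translatePat hgQ⟩
  · rintro g ⟨g0, hg0, rfl⟩ g' ⟨g0', hg0', rfl⟩
    exact rtg_link_translate s (h2 g0 hg0 g0' hg0')

/-- local goodness for the image of any good set -/
lemma localGood_good {S Q : Set Face} (i : Fin 3) (hQ : good S Q) :
    LocalGood (dualPat i Q) := by
  obtain ⟨⟨R, hR, t, rfl⟩, _⟩ := hQ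
  obtain ⟨j, rfl⟩ := lfs_list R hR
  rw [dualPat_translate]
  exact localGood_translate _ (local_all i j)

lemma dualFace_nonempty (i : Fin 3) (f : Face) : ∃ g, g ∈ dualFace i f := by
  obtain ⟨x, τ⟩ := f
  rcases types_cover i τ with h | h | h <;> rw [h]
  · exact ⟨(Nfun i x, 0), by rw [dualFace_main]; simp⟩
  · exact ⟨(Nfun i x + e1, 1), by rw [dualFace_oth1]; simp⟩
  · exact ⟨(Nfun i x + e1, 2), by rw [dualFace_oth2]; simp⟩

lemma dualFace_subset {i : Fin 3} {S : Set Face} {f : Face} (hf : f ∈ S) :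
    dualFace i f ⊆ dualPat i S := fun g hg => mem_dualPat.2 ⟨f, hf, hg⟩

/-- the dual substitution preserves `L_FS`-coveredness -/
lemma covered_dualPat {S : Set Face} (i : Fin 3) (h : IsCovered LFS S) :
    IsCovered LFS (dualPat i S) := by
  have key : ∀ f f' : Face, Relation.ReflTransGen (link S) f f' → f ∈ S →
      ∀ g ∈ dualFace i f, ∀ g' ∈ dualFace i f',
        Relation.ReflTransGen (link (dualPat i S)) g g' := by
    intro f f' hff hfS
    induction hff with
    | refl =>
        intro g hg g' hg'
        obtain ⟨Q, hQ, hfQ⟩ := covered_start h f hfS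
        have hloc := (localGood_good i hQ).2
        have hsub : dualPat i Q ⊆ dualPat i S := dualPat_mono hQ.2
        exact rtg_link_mono hsub
          (hloc g (dualFace_subset hfQ hg) g' (dualFace_subset hfQ hg'))
    | tail hab hbc ih =>
        rename_i b c
        intro g hg g' hg'
        obtain ⟨gb, hgb⟩ := dualFace_nonempty i b
        obtain ⟨Q, hQ, hbQ, hcQ⟩ := hbc
        have step1 := ih g hg gb hgb
        have hloc := (localGood_good i hQ).2
        have hsub : dualPat i Q ⊆ dualPat i S := dualPat_mono hQ.2
        have step2 := rtg_link_mono hsub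
          (hloc gb (dualFace_subset hbQ hgb) g' (dualFace_subset hcQ hg'))
        exact step1.trans step2
  apply covered_of_rtg
  · intro g hg
    rcases mem_dualPat.1 hg with ⟨f, hf, hgf⟩
    obtain ⟨Q, hQ, hfQ⟩ := covered_start h f hf
    obtain ⟨Q', hQ', hgQ'⟩ := (localGood_good i hQ).1 g (dualFace_subset hfQ hgf)
    exact ⟨Q', good_mono hQ' (dualPat_mono hQ.2), hgQ'⟩
  · intro g hg g' hg'
    rcases mem_dualPat.1 hg with ⟨f, hf, hgf⟩
    rcases mem_dualPat.1 hg' with ⟨f', hf', hgf'⟩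
    exact key f f' (rtg_of_covered h f hf f' hf') hf g hgf g' hgf'

end AnnAux
namespace AnnAux

lemma transL_shift (v s : Z3) (l : List Face) (z : Z3) (c : Fin 3) :
    (z, c) ∈ transL s l ↔ (z + v, c) ∈ transL (s + v) l := by
  simp only [transL, List.mem_map, Prod.mk.injEq]
  constructor
  · rintro ⟨r, hr, h1, h2⟩
    exact ⟨r, hr, by rw [← h1]; abel, h2⟩
  · rintro ⟨r, hr, h1, h2⟩
    refine ⟨r, hr, ?_, h2⟩
    have : r.1 + s + v = z + v := by rw [← h1]; abel
    exact add_right_cancel this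

lemma shift_val {s : Z3} {l : List Face} {c : Fin 3} (h : ((0 : Z3), c) ∈ transL s l) :
    ∃ r ∈ l, s = -r.1 := by
  simp only [transL, List.mem_map, Prod.mk.injEq] at h
  obtain ⟨r, hr, h1, _⟩ := h
  exact ⟨r, hr, (neg_eq_of_add_eq_zero_right h1).symm⟩

/-- completion of an edge pattern inside a strongly covered set -/
lemma third_of {c c' : Fin 3} {δ : Z3}
    (hcore : ∀ j : Fin 9, ∀ r ∈ lfsL j,
      ((0 : Z3), c) ∈ transL (-r.1) (lfsL j) → ((δ, c) ∈ transL (-r.1) (lfsL j)) →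
      ((0 : Z3), c') ∈ transL (-r.1) (lfsL j))
    {A : Set Face}
    (hstrong : ∀ X ∈ Ledge, ∀ t : Z3, translatePat t X ⊆ A →
      ∃ Y ∈ LFS, ∃ s : Z3, translatePat t X ⊆ translatePat s Y ∧ translatePat s Y ⊆ A)
    (hX : ({((0 : Z3), c), (δ, c)} : Set Face) ∈ Ledge)
    {x : Z3} (h1 : (x, c) ∈ A) (h2 : (x + δ, c) ∈ A) : (x, c') ∈ A := by
  have hsub : translatePat x ({((0 : Z3), c), (δ, c)} : Set Face) ⊆ A := by
    rintro g ⟨f, hf, rfl⟩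
    simp only [Set.mem_insert_iff, Set.mem_singleton_iff] at hf
    rcases hf with rfl | rfl
    · simpa using h1
    · simpa [add_comm] using h2
  obtain ⟨Y, hY, s, hs1, hs2⟩ := hstrong _ hX x hsub
  obtain ⟨j, rfl⟩ := lfs_list Y hY
  rw [translatePat_tset] at hs1 hs2
  have hm1 : (x, c) ∈ transL s (lfsL j) :=
    mem_tset.1 (hs1 ⟨((0 : Z3), c), by simp, by simp⟩)
  have hm2 : (x + δ, c) ∈ transL s (lfsL j) :=
    mem_tset.1 (hs1 ⟨(δ, c), by simp, by simp [add_comm]⟩)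
  have hm1' : ((0 : Z3), c) ∈ transL (s + -x) (lfsL j) := by
    have := (transL_shift (-x) s (lfsL j) x c).1 hm1
    simpa using this
  have hm2' : ((δ : Z3), c) ∈ transL (s + -x) (lfsL j) := by
    have := (transL_shift (-x) s (lfsL j) (x + δ) c).1 hm2
    simpa [add_comm, add_assoc, add_left_comm] using this
  obtain ⟨r, hr, hsx⟩ := shift_val hm1'
  rw [hsx] at hm1' hm2'
  have hm3 := hcore j r hr hm1' hm2'
  rw [← hsx] at hm3
  have hm3' : (x, c') ∈ transL s (lfsL j) := by
    have := (transL_shift x (s + -x) (lfsL j) 0 c').1 hm3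
    simpa using this
  exact hs2 (mem_tset.2 hm3')

lemma core1 : ∀ j : Fin 9, ∀ r ∈ lfsL j,
    ((0 : Z3), 1) ∈ transL (-r.1) (lfsL j) → ((![1,0,0], 1) ∈ transL (-r.1) (lfsL j)) →
    ((0 : Z3), 2) ∈ transL (-r.1) (lfsL j) := by decide

lemma core2 : ∀ j : Fin 9, ∀ r ∈ lfsL j,
    ((0 : Z3), 2) ∈ transL (-r.1) (lfsL j) → ((![1,0,0], 2) ∈ transL (-r.1) (lfsL j)) →
    ((0 : Z3), 1) ∈ transL (-r.1) (lfsL j) := by decide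

lemma core3 : ∀ j : Fin 9, ∀ r ∈ lfsL j,
    ((0 : Z3), 2) ∈ transL (-r.1) (lfsL j) → ((![0,1,0], 2) ∈ transL (-r.1) (lfsL j)) →
    ((0 : Z3), 0) ∈ transL (-r.1) (lfsL j) := by decide

end AnnAux
namespace AnnAux

lemma parent0 {i : Fin 3} {A : Set Face} {y : Z3} (h : (y, (0 : Fin 3)) ∈ dualPat i A) :
    ∃ x, (x, i) ∈ A ∧ y = Nfun i x := by
  obtain ⟨x, τ, hxA, hc⟩ := parent_of_mem h
  rcases hc with ⟨rfl, hy⟩ | ⟨_, hc, _⟩ | ⟨_, hc, _⟩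
  · exact ⟨x, hxA, hy⟩
  · exact absurd hc (by decide)
  · exact absurd hc (by decide)

lemma parent1 {i : Fin 3} {A : Set Face} {y : Z3} (h : (y, (1 : Fin 3)) ∈ dualPat i A) :
    (∃ x, (x, i) ∈ A ∧ y = Nfun i x) ∨ (∃ x, (x, oth1 i) ∈ A ∧ y = Nfun i x + e1) := by
  obtain ⟨x, τ, hxA, hc⟩ := parent_of_mem h
  rcases hc with ⟨rfl, hy⟩ | ⟨rfl, _, hy⟩ | ⟨_, hc, _⟩
  · exact Or.inl ⟨x, hxA, hy⟩
  · exact Or.inr ⟨x, hxA, hy⟩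
  · exact absurd hc (by decide)

lemma parent2 {i : Fin 3} {A : Set Face} {y : Z3} (h : (y, (2 : Fin 3)) ∈ dualPat i A) :
    (∃ x, (x, i) ∈ A ∧ y = Nfun i x) ∨ (∃ x, (x, oth2 i) ∈ A ∧ y = Nfun i x + e1) := by
  obtain ⟨x, τ, hxA, hc⟩ := parent_of_mem h
  rcases hc with ⟨rfl, hy⟩ | ⟨_, hc, _⟩ | ⟨rfl, _, hy⟩
  · exact Or.inl ⟨x, hxA, hy⟩
  · exact absurd hc (by decide)
  · exact Or.inr ⟨x, hxA, hy⟩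

lemma parent_rel {i : Fin 3} (a b : Z3) {x1 x2 δ y : Z3}
    (hy1 : y = Nfun i x1 + a) (hy2 : y + δ = Nfun i x2 + b) (d : Z3)
    (hd : a + δ - b = d) : x2 = x1 + Mtfun i d := by
  apply shift_of
  have h' : Nfun i x2 + b = Nfun i x1 + a + δ := by rw [← hy2, hy1]
  calc Nfun i x2 = Nfun i x2 + b - b := by abel
    _ = Nfun i x1 + a + δ - b := by rw [h']
    _ = Nfun i x1 + d := by rw [← hd]; abel

section Pairs

variable {w : R3} (hw : WOrd w)
  (havoid : ∀ X ∈ Forbidden, ∀ t : Z3, ¬ translatePat t X ⊆ stepped w)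
  {A : Set Face} (hA : A ⊆ stepped w)
  (hstrong : ∀ X ∈ Ledge, ∀ t : Z3, translatePat t X ⊆ A →
    ∃ Y ∈ LFS, ∃ s : Z3, translatePat t X ⊆ translatePat s Y ∧ translatePat s Y ⊆ A)
  {i : Fin 3} {y : Z3}

include hw hA in
lemma pair0 {δ : Z3} (hcert : ∀ i : Fin 3, Cert (Mtfun i δ) i i)
    (h1 : (y, (0 : Fin 3)) ∈ dualPat i A) (h2 : (y + δ, (0 : Fin 3)) ∈ dualPat i A) :
    False := by
  obtain ⟨x1, hx1, hy1⟩ := parent0 h1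
  obtain ⟨x2, hx2, hy2⟩ := parent0 h2
  have hx2' : x2 = x1 + Mtfun i δ :=
    parent_rel 0 0 (hy1.trans (add_zero _).symm) (hy2.trans (add_zero _).symm) δ (by abel)
  rw [hx2'] at hx2
  exact stepped_contra hw _ (hA hx1) (hA hx2) (hcert i)

include hw hA in
lemma pair1_001 (h1 : (y, (1 : Fin 3)) ∈ dualPat i A)
    (h2 : (y + ![0,0,1], (1 : Fin 3)) ∈ dualPat i A) : False := by
  rcases parent1 h1 with ⟨x1, hx1, hy1⟩ | ⟨x1, hx1, hy1⟩ <;>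
    rcases parent1 h2 with ⟨x2, hx2, hy2⟩ | ⟨x2, hx2, hy2⟩
  · have hx2' : x2 = x1 + Mtfun i ![0,0,1] :=
      parent_rel 0 0 (hy1.trans (add_zero _).symm) (hy2.trans (add_zero _).symm) _ (by decide)
    rw [hx2'] at hx2
    exact stepped_contra hw _ (hA hx1) (hA hx2)
      ((by decide : ∀ i : Fin 3, Cert (Mtfun i ![0,0,1]) i i) i)
  · have hx2' : x2 = x1 + Mtfun i ![-1,0,1] :=
      parent_rel 0 e1 (hy1.trans (add_zero _).symm) hy2 _ (by decide)
    rw [hx2'] at hx2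
    exact stepped_contra hw _ (hA hx1) (hA hx2)
      ((by decide : ∀ i : Fin 3, Cert (Mtfun i ![-1,0,1]) i (oth1 i)) i)
  · have hx2' : x2 = x1 + Mtfun i ![1,0,1] :=
      parent_rel e1 0 hy1 (hy2.trans (add_zero _).symm) _ (by decide)
    rw [hx2'] at hx2
    exact stepped_contra hw _ (hA hx1) (hA hx2)
      ((by decide : ∀ i : Fin 3, Cert (Mtfun i ![1,0,1]) (oth1 i) i) i)
  · have hx2' : x2 = x1 + Mtfun i ![0,0,1] :=
      parent_rel e1 e1 hy1 hy2 _ (by decide)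
    rw [hx2'] at hx2
    exact stepped_contra hw _ (hA hx1) (hA hx2)
      ((by decide : ∀ i : Fin 3, Cert (Mtfun i ![0,0,1]) (oth1 i) (oth1 i)) i)

include hw havoid hA hstrong in
lemma pair1_100 (h1 : (y, (1 : Fin 3)) ∈ dualPat i A)
    (h2 : (y + ![1,0,0], (1 : Fin 3)) ∈ dualPat i A) : (y, (2 : Fin 3)) ∈ dualPat i A := by
  rcases parent1 h1 with ⟨x1, hx1, hy1⟩ | ⟨x1, hx1, hy1⟩
  · exact mem_dualPat.2 ⟨(x1, i), hx1, by rw [dualFace_main]; simp [hy1]⟩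
  rcases parent1 h2 with ⟨x2, hx2, hy2⟩ | ⟨x2, hx2, hy2⟩
  · have hx2' : x2 = x1 + Mtfun i ![2,0,0] :=
      parent_rel e1 0 hy1 (hy2.trans (add_zero _).symm) _ (by decide)
    rw [hx2'] at hx2
    exact absurd (stepped_contra hw _ (hA hx1) (hA hx2)
      ((by decide : ∀ i : Fin 3, Cert (Mtfun i ![2,0,0]) (oth1 i) i) i)) not_false
  have hx2' : x2 = x1 + Mtfun i ![1,0,0] := parent_rel e1 e1 hy1 hy2 _ (by decide)
  fin_cases i
  · replace hx1 : (x1, (1 : Fin 3)) ∈ A := hx1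
    replace hx2 : (x1 + (![1,0,0] : Z3), (1 : Fin 3)) ∈ A := by
      have h' : x2 = x1 + (![1,0,0] : Z3) := by rw [hx2']; congr 1
      rw [← h']; exact hx2
    have hthird : (x1, (2 : Fin 3)) ∈ A := third_of core1 hstrong (by simp [Ledge]) hx1 hx2
    show (y, (2 : Fin 3)) ∈ dualPat 0 A
    refine mem_dualPat.2 ⟨(x1, 2), hthird, ?_⟩
    show (y, (2 : Fin 3)) ∈ dualFace 0 (x1, oth2 0)
    rw [dualFace_oth2]
    replace hy1 : y = Nfun 0 x1 + e1 := hy1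
    simp [hy1]
  · replace hx1 : (x1, (0 : Fin 3)) ∈ A := hx1
    replace hx2 : (x1 + (![0,1,0] : Z3), (0 : Fin 3)) ∈ A := by
      have h' : x2 = x1 + (![0,1,0] : Z3) := by rw [hx2']; congr 1
      rw [← h']; exact hx2
    exact absurd (forb_contra havoid (by simp [Forbidden]) (hA hx1) (hA hx2)) not_false
  · replace hx1 : (x1, (0 : Fin 3)) ∈ A := hx1
    replace hx2 : (x1 + (![0,0,1] : Z3), (0 : Fin 3)) ∈ A := by
      have h' : x2 = x1 + (![0,0,1] : Z3) := by rw [hx2']; congr 1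
      rw [← h']; exact hx2
    exact absurd (forb_contra havoid (by simp [Forbidden]) (hA hx1) (hA hx2)) not_false

include hw havoid hA hstrong in
lemma pair2_100 (h1 : (y, (2 : Fin 3)) ∈ dualPat i A)
    (h2 : (y + ![1,0,0], (2 : Fin 3)) ∈ dualPat i A) : (y, (1 : Fin 3)) ∈ dualPat i A := by
  rcases parent2 h1 with ⟨x1, hx1, hy1⟩ | ⟨x1, hx1, hy1⟩
  · exact mem_dualPat.2 ⟨(x1, i), hx1, by rw [dualFace_main]; simp [hy1]⟩
  rcases parent2 h2 with ⟨x2, hx2, hy2⟩ | ⟨x2, hx2, hy2⟩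
  · have hx2' : x2 = x1 + Mtfun i ![2,0,0] :=
      parent_rel e1 0 hy1 (hy2.trans (add_zero _).symm) _ (by decide)
    rw [hx2'] at hx2
    exact absurd (stepped_contra hw _ (hA hx1) (hA hx2)
      ((by decide : ∀ i : Fin 3, Cert (Mtfun i ![2,0,0]) (oth2 i) i) i)) not_false
  have hx2' : x2 = x1 + Mtfun i ![1,0,0] := parent_rel e1 e1 hy1 hy2 _ (by decide)
  fin_cases i
  · replace hx1 : (x1, (2 : Fin 3)) ∈ A := hx1
    replace hx2 : (x1 + (![1,0,0] : Z3), (2 : Fin 3)) ∈ A := by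
      have h' : x2 = x1 + (![1,0,0] : Z3) := by rw [hx2']; congr 1
      rw [← h']; exact hx2
    have hthird : (x1, (1 : Fin 3)) ∈ A := third_of core2 hstrong (by simp [Ledge]) hx1 hx2
    show (y, (1 : Fin 3)) ∈ dualPat 0 A
    refine mem_dualPat.2 ⟨(x1, 1), hthird, ?_⟩
    show (y, (1 : Fin 3)) ∈ dualFace 0 (x1, oth1 0)
    rw [dualFace_oth1]
    replace hy1 : y = Nfun 0 x1 + e1 := hy1
    simp [hy1]
  · replace hx1 : (x1, (2 : Fin 3)) ∈ A := hx1
    replace hx2 : (x1 + (![0,1,0] : Z3), (2 : Fin 3)) ∈ A := by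
      have h' : x2 = x1 + (![0,1,0] : Z3) := by rw [hx2']; congr 1
      rw [← h']; exact hx2
    have hthird : (x1, (0 : Fin 3)) ∈ A := third_of core3 hstrong (by simp [Ledge]) hx1 hx2
    show (y, (1 : Fin 3)) ∈ dualPat 1 A
    refine mem_dualPat.2 ⟨(x1, 0), hthird, ?_⟩
    show (y, (1 : Fin 3)) ∈ dualFace 1 (x1, oth1 1)
    rw [dualFace_oth1]
    replace hy1 : y = Nfun 1 x1 + e1 := hy1
    simp [hy1]
  · replace hx1 : (x1, (1 : Fin 3)) ∈ A := hx1
    replace hx2 : (x1 + (![0,0,1] : Z3), (1 : Fin 3)) ∈ A := by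
      have h' : x2 = x1 + (![0,0,1] : Z3) := by rw [hx2']; congr 1
      rw [← h']; exact hx2
    exact absurd (forb_contra havoid (by simp [Forbidden]) (hA hx1) (hA hx2)) not_false

include hw havoid hA in
lemma pair2_010 (h1 : (y, (2 : Fin 3)) ∈ dualPat i A)
    (h2 : (y + ![0,1,0], (2 : Fin 3)) ∈ dualPat i A) : (y, (0 : Fin 3)) ∈ dualPat i A := by
  rcases parent2 h1 with ⟨x1, hx1, hy1⟩ | ⟨x1, hx1, hy1⟩
  · exact mem_dualPat.2 ⟨(x1, i), hx1, by rw [dualFace_main]; simp [hy1]⟩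
  rcases parent2 h2 with ⟨x2, hx2, hy2⟩ | ⟨x2, hx2, hy2⟩
  · have hx2' : x2 = x1 + Mtfun i ![1,1,0] :=
      parent_rel e1 0 hy1 (hy2.trans (add_zero _).symm) _ (by decide)
    rw [hx2'] at hx2
    exact absurd (stepped_contra hw _ (hA hx1) (hA hx2)
      ((by decide : ∀ i : Fin 3, Cert (Mtfun i ![1,1,0]) (oth2 i) i) i)) not_false
  have hx2' : x2 = x1 + Mtfun i ![0,1,0] := parent_rel e1 e1 hy1 hy2 _ (by decide)
  fin_cases i
  · replace hx1 : (x1, (2 : Fin 3)) ∈ A := hx1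
    replace hx2 : (x1 + (![1,1,0] : Z3), (2 : Fin 3)) ∈ A := by
      have h' : x2 = x1 + (![1,1,0] : Z3) := by rw [hx2']; congr 1
      rw [← h']; exact hx2
    exact absurd (forb_contra havoid (by simp [Forbidden]) (hA hx1) (hA hx2)) not_false
  · replace hx1 : (x1, (2 : Fin 3)) ∈ A := hx1
    replace hx2 : (x1 + (![1,1,0] : Z3), (2 : Fin 3)) ∈ A := by
      have h' : x2 = x1 + (![1,1,0] : Z3) := by rw [hx2']; congr 1
      rw [← h']; exact hx2
    exact absurd (forb_contra havoid (by simp [Forbidden]) (hA hx1) (hA hx2)) not_false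
  · replace hx1 : (x1, (1 : Fin 3)) ∈ A := hx1
    replace hx2 : (x1 + (![1,0,1] : Z3), (1 : Fin 3)) ∈ A := by
      have h' : x2 = x1 + (![1,0,1] : Z3) := by rw [hx2']; congr 1
      rw [← h']; exact hx2
    exact absurd (stepped_contra hw _ (hA hx1) (hA hx2)
      (by decide : Cert ![1,0,1] 1 1)) not_false

end Pairs

end AnnAux
namespace AnnAux

lemma strongly_dualPat {w : R3} (hw : WOrd w)
    (havoid : ∀ X ∈ Forbidden, ∀ t : Z3, ¬ translatePat t X ⊆ stepped w)
    {A : Set Face} (hA : A ⊆ stepped w)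
    (hsA : IsStronglyCovered LFS A) (i : Fin 3) :
    IsStronglyCovered LFS (dualPat i A) := by
  obtain ⟨hcov, hstrong⟩ := hsA
  constructor
  · exact covered_dualPat i hcov
  · intro X hX t hsub
    simp only [Ledge, Set.mem_insert_iff, Set.mem_singleton_iff] at hX
    have pairmem : ∀ (c : Fin 3) (δ : Z3),
        X = ({((0:Z3), c), (δ, c)} : Set Face) →
        (t, c) ∈ dualPat i A ∧ (t + δ, c) ∈ dualPat i A := by
      rintro c δ rfl
      constructor
      · have := hsub (mem_translatePat (P := {((0:Z3), c), (δ, c)})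
          (show ((0:Z3), c) ∈ _ by simp))
        simpa using this
      · have := hsub (mem_translatePat (P := {((0:Z3), c), (δ, c)})
          (show ((δ:Z3), c) ∈ _ by simp))
        simpa [add_comm] using this
    rcases hX with rfl | rfl | rfl | rfl | rfl | rfl | rfl | rfl | rfl | rfl | rfl | rfl
    · exact ⟨_, by simp [LFS], t, subset_rfl, hsub⟩
    · exact ⟨_, by simp [LFS], t, subset_rfl, hsub⟩
    · exact ⟨_, by simp [LFS], t, subset_rfl, hsub⟩
    · exact ⟨_, by simp [LFS], t, subset_rfl, hsub⟩
    · exact ⟨_, by simp [LFS], t, subset_rfl, hsub⟩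
    · exact ⟨_, by simp [LFS], t, subset_rfl, hsub⟩
    · obtain ⟨hm1, hm2⟩ := pairmem 0 ![0,1,0] rfl
      exact (pair0 hw hA
        (by decide : ∀ i : Fin 3, Cert (Mtfun i ![0,1,0]) i i) hm1 hm2).elim
    · obtain ⟨hm1, hm2⟩ := pairmem 0 ![0,0,1] rfl
      exact (pair0 hw hA
        (by decide : ∀ i : Fin 3, Cert (Mtfun i ![0,0,1]) i i) hm1 hm2).elim
    · obtain ⟨hm1, hm2⟩ := pairmem 1 ![1,0,0] rfl
      have hthird := pair1_100 hw havoid hA hstrong hm1 hm2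
      refine ⟨{(0, 1), (![1,0,0], 1), (0, 2)}, by simp [LFS], t, ?_, ?_⟩
      · exact translatePat_mono t (by
          intro g hg
          simp only [Set.mem_insert_iff, Set.mem_singleton_iff] at hg ⊢
          tauto)
      · rintro g ⟨f, hf, rfl⟩
        simp only [Set.mem_insert_iff, Set.mem_singleton_iff] at hf
        rcases hf with rfl | rfl | rfl
        · simpa using hm1
        · simpa [add_comm] using hm2
        · simpa using hthird
    · obtain ⟨hm1, hm2⟩ := pairmem 1 ![0,0,1] rfl
      exact (pair1_001 hw hA hm1 hm2).elim
    · obtain ⟨hm1, hm2⟩ := pairmem 2 ![1,0,0] rfl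
      have hthird := pair2_100 hw havoid hA hstrong hm1 hm2
      refine ⟨{(0, 2), (![1,0,0], 2), (0, 1)}, by simp [LFS], t, ?_, ?_⟩
      · exact translatePat_mono t (by
          intro g hg
          simp only [Set.mem_insert_iff, Set.mem_singleton_iff] at hg ⊢
          tauto)
      · rintro g ⟨f, hf, rfl⟩
        simp only [Set.mem_insert_iff, Set.mem_singleton_iff] at hf
        rcases hf with rfl | rfl | rfl
        · simpa using hm1
        · simpa [add_comm] using hm2
        · simpa using hthird
    · obtain ⟨hm1, hm2⟩ := pairmem 2 ![0,1,0] rfl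
      have hthird := pair2_010 hw havoid hA hm1 hm2
      refine ⟨{(0, 2), (![0,1,0], 2), (0, 0)}, by simp [LFS], t, ?_, ?_⟩
      · exact translatePat_mono t (by
          intro g hg
          simp only [Set.mem_insert_iff, Set.mem_singleton_iff] at hg ⊢
          tauto)
      · rintro g ⟨f, hf, rfl⟩
        simp only [Set.mem_insert_iff, Set.mem_singleton_iff] at hf
        rcases hf with rfl | rfl | rfl
        · simpa using hm1
        · simpa [add_comm] using hm2
        · simpa using hthird

end AnnAux
namespace AnnAux

lemma mem_faceGeom {f : Face} {q : R3} :
    q ∈ faceGeom f ↔ q f.2 = (f.1 f.2 : ℝ) ∧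
      ∀ j, j ≠ f.2 → (f.1 j : ℝ) ≤ q j ∧ q j ≤ (f.1 j : ℝ) + 1 := Iff.rfl

lemma faceGeom_closed (f : Face) : IsClosed (faceGeom f) := by
  have : faceGeom f = {q : R3 | q f.2 = (f.1 f.2 : ℝ)} ∩
      ⋂ j : Fin 3, {q : R3 | j ≠ f.2 → ((f.1 j : ℝ) ≤ q j ∧ q j ≤ (f.1 j : ℝ) + 1)} := by
    ext q
    simp only [mem_faceGeom, Set.mem_inter_iff, Set.mem_iInter, Set.mem_setOf_eq]
  rw [this]
  apply IsClosed.inter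
  · exact isClosed_eq (continuous_apply f.2) continuous_const
  · apply isClosed_iInter
    intro j
    rcases eq_or_ne j f.2 with h | h
    · simp [h]
    · have : {q : R3 | j ≠ f.2 → ((f.1 j : ℝ) ≤ q j ∧ q j ≤ (f.1 j : ℝ) + 1)} =
          {q : R3 | (f.1 j : ℝ) ≤ q j} ∩ {q : R3 | q j ≤ (f.1 j : ℝ) + 1} := by
        ext q; simp [h]
      rw [this]
      exact (isClosed_le continuous_const (continuous_apply j)).inter
        (isClosed_le (continuous_apply j) continuous_const)

lemma faceGeom_bound {f : Face} {q : R3} (h : q ∈ faceGeom f) (j : Fin 3) :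
    (f.1 j : ℝ) ≤ q j ∧ q j ≤ (f.1 j : ℝ) + 1 := by
  obtain ⟨h1, h2⟩ := h
  rcases eq_or_ne j f.2 with rfl | hj
  · rw [h1]; constructor <;> linarith
  · exact h2 j hj

lemma patGeom_closed (S : Set Face) : IsClosed (patGeom S) := by
  rw [← closure_subset_iff_isClosed]
  intro q hq
  classical
  set T : Set Face := {f ∈ S | ∀ j, |(f.1 j : ℝ) - q j| ≤ 2} with hT
  have hTfin : T.Finite := by
    have hsub : T ⊆ {x : Z3 | ∀ j, x j ∈ Set.Icc (⌊q j⌋ - 2) (⌊q j⌋ + 3)} ×ˢ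
        (Set.univ : Set (Fin 3)) := by
      rintro ⟨x, c⟩ ⟨_, hb⟩
      refine ⟨fun j => ?_, trivial⟩
      have := hb j
      have h1 : (x j : ℝ) ≤ q j + 2 := by
        have := abs_le.1 this
        linarith [this.1, this.2]
      have h2 : q j - 2 ≤ (x j : ℝ) := by
        have := abs_le.1 this
        linarith [this.1, this.2]
      constructor
      · have hr : ((⌊q j⌋ - 2 : ℤ) : ℝ) ≤ ((x j : ℤ) : ℝ) := by
          push_cast
          linarith [Int.floor_le (q j)]
        exact_mod_cast hr
      · have hr : ((x j : ℤ) : ℝ) ≤ ((⌊q j⌋ + 3 : ℤ) : ℝ) := by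
          push_cast
          linarith [Int.lt_floor_add_one (q j)]
        exact_mod_cast hr
    refine Set.Finite.subset (Set.Finite.prod ?_ (Set.finite_univ)) hsub
    refine Set.Finite.subset (Set.Finite.pi (fun j : Fin 3 =>
      Set.finite_Icc (⌊q j⌋ - 2) (⌊q j⌋ + 3))) ?_
    intro x hx
    exact fun j _ => hx j
  have hclosedT : IsClosed (patGeom T) := by
    have : patGeom T = ⋃ f ∈ T, faceGeom f := rfl
    rw [this]
    exact hTfin.isClosed_biUnion (fun f _ => faceGeom_closed f)
  have hqT : q ∈ closure (patGeom T) := by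
    rw [Metric.mem_closure_iff] at hq ⊢
    intro ε hε
    obtain ⟨z, hz, hdz⟩ := hq (min ε 1) (lt_min hε one_pos)
    refine ⟨z, ?_, lt_of_lt_of_le hdz (min_le_left _ _)⟩
    obtain ⟨f, hfS, hzf⟩ := Set.mem_iUnion₂.1 hz
    refine Set.mem_iUnion₂.2 ⟨f, ⟨hfS, fun j => ?_⟩, hzf⟩
    have hb := faceGeom_bound hzf j
    have hdj : |q j - z j| ≤ 1 := by
      have : dist (q j) (z j) ≤ dist q z := dist_le_pi_dist q z j
      have hlt : dist q z < 1 := lt_of_lt_of_le hdz (min_le_right _ _)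
      rw [Real.dist_eq] at this
      linarith
    have := abs_le.1 hdj
    rw [abs_le]
    constructor <;> linarith [hb.1, hb.2, this.1, this.2]
  have := hclosedT.closure_subset hqT
  obtain ⟨f, hf, hqf⟩ := Set.mem_iUnion₂.1 this
  exact Set.mem_iUnion₂.2 ⟨f, hf.1, hqf⟩

/-- decidable touching predicate for two faces at relative position `d` -/
def TouchD (d : Z3) (c c' : Fin 3) : Prop :=
  (∀ j, -1 ≤ d j ∧ d j ≤ 1) ∧ (c = c' → d c = 0) ∧ (c ≠ c' → 0 ≤ d c ∧ d c' ≤ 0)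

instance (d : Z3) (c c' : Fin 3) : Decidable (TouchD d c c') := by
  unfold TouchD; infer_instance

lemma faceTouch {x x' : Z3} {c c' : Fin 3} :
    (faceGeom (x, c) ∩ faceGeom (x', c')).Nonempty ↔ TouchD (x - x') c c' := by
  constructor
  · rintro ⟨q, hq, hq'⟩
    have hx : ∀ j, (x j : ℝ) ≤ q j ∧ q j ≤ (x j : ℝ) + 1 := fun j => faceGeom_bound hq j
    have hx' : ∀ j, (x' j : ℝ) ≤ q j ∧ q j ≤ (x' j : ℝ) + 1 := fun j => faceGeom_bound hq' j
    have hqc : q c = (x c : ℝ) := hq.1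
    have hqc' : q c' = (x' c' : ℝ) := hq'.1
    refine ⟨fun j => ?_, fun hcc => ?_, fun hcc => ?_⟩
    · have h1 : (x j : ℝ) ≤ (x' j : ℝ) + 1 := le_trans (hx j).1 (hx' j).2
      have h2 : (x' j : ℝ) ≤ (x j : ℝ) + 1 := le_trans (hx' j).1 (hx j).2
      have hi1 : (x j : ℤ) ≤ x' j + 1 := by exact_mod_cast h1
      have hi2 : (x' j : ℤ) ≤ x j + 1 := by exact_mod_cast h2
      simp only [Pi.sub_apply]
      omega
    · subst hcc
      have : (x c : ℝ) = (x' c : ℝ) := by rw [← hqc, ← hq'.1]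
      have : (x c : ℤ) = x' c := by exact_mod_cast this
      simp [this]
    · constructor
      · have h1 : (x' c : ℝ) ≤ q c := (hx' c).1
        rw [hqc] at h1
        have hi : (x' c : ℤ) ≤ x c := by exact_mod_cast h1
        simp only [Pi.sub_apply]
        omega
      · have h2 : (x c' : ℝ) ≤ q c' := (hx c').1
        rw [hqc'] at h2
        have hi : (x c' : ℤ) ≤ x' c' := by exact_mod_cast h2
        simp only [Pi.sub_apply]
        omega
  · rintro ⟨hb, hcc, hcc'⟩
    have hxc : (x' c : ℤ) ≤ x c := by
      rcases eq_or_ne c c' with h | h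
      · have := hcc h; simp only [Pi.sub_apply] at this; omega
      · have := (hcc' h).1; simp only [Pi.sub_apply] at this; omega
    have hxc' : (x c' : ℤ) ≤ x' c' := by
      rcases eq_or_ne c c' with h | h
      · subst h; have := hcc rfl; simp only [Pi.sub_apply] at this; omega
      · have := (hcc' h).2; simp only [Pi.sub_apply] at this; omega
    have hup : ∀ j, (x' j : ℤ) ≤ x j + 1 := by
      intro j; have := (hb j).1; simp only [Pi.sub_apply] at this; omega
    have hup' : ∀ j, (x j : ℤ) ≤ x' j + 1 := by
      intro j; have := (hb j).2; simp only [Pi.sub_apply] at this; omega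
    refine ⟨fun j => max (x j : ℝ) (x' j : ℝ), ⟨?_, ?_⟩, ?_, ?_⟩
    · show max (x c : ℝ) (x' c : ℝ) = ((x, c).1 (x, c).2 : ℝ)
      rw [max_eq_left (by exact_mod_cast hxc)]
    · intro j hj
      constructor
      · exact le_max_left _ _
      · apply max_le
        · linarith
        · have : (x' j : ℝ) ≤ (x j : ℝ) + 1 := by exact_mod_cast hup j
          linarith
    · show max (x c' : ℝ) (x' c' : ℝ) = ((x', c').1 (x', c').2 : ℝ)
      rw [max_eq_right (by exact_mod_cast hxc')]
    · intro j hj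
      constructor
      · exact le_max_right _ _
      · apply max_le
        · have : (x j : ℝ) ≤ (x' j : ℝ) + 1 := by exact_mod_cast hup' j
          linarith
        · linarith

end AnnAux
namespace AnnAux

def aOf : Fin 3 → Z3 := ![0, e1, e1]

def tOf (i β : Fin 3) : Fin 3 := ![i, oth1 i, oth2 i] β

def compat (β c : Fin 3) : Prop := β = 0 ∨ (β = 1 ∧ c = 1) ∨ (β = 2 ∧ c = 2)

instance (β c : Fin 3) : Decidable (compat β c) := by unfold compat; infer_instance

def badU : Fin 3 → Z3 := ![![1,1,-1], ![1,1,-1], ![1,-1,1]]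

set_option maxRecDepth 40000 in
lemma touch_core : ∀ (i β β' c c' : Fin 3) (v : Fin 3 → Fin 3),
    compat β c → compat β' c' →
    TouchD (fun j => (v j : ℤ) - 1) c c' →
    TouchD (Mtfun i (((fun j => (v j : ℤ) - 1) : Z3) - aOf β + aOf β')) (tOf i β) (tOf i β') ∨
    Cert (-(Mtfun i (((fun j => (v j : ℤ) - 1) : Z3) - aOf β + aOf β'))) (tOf i β) (tOf i β') ∨
    (β = 0 ∧ β' = 0 ∧
      (Mtfun i (((fun j => (v j : ℤ) - 1) : Z3) - aOf β + aOf β') = badU i ∨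
       Mtfun i (((fun j => (v j : ℤ) - 1) : Z3) - aOf β + aOf β') = -badU i)) := by
  decide

lemma child_split {i : Fin 3} {x : Z3} {τ : Fin 3} {g : Face} (hg : g ∈ dualFace i (x, τ)) :
    ∃ β c, compat β c ∧ τ = tOf i β ∧ g = (Nfun i x + aOf β, c) := by
  rcases types_cover i τ with h | h | h <;> rw [h] at hg
  · rw [dualFace_main] at hg
    rcases hg with rfl | rfl | rfl
    · exact ⟨0, 0, Or.inl rfl, h, by simp [aOf, tOf]⟩
    · exact ⟨0, 1, Or.inl rfl, h, by simp [aOf, tOf]⟩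
    · exact ⟨0, 2, Or.inl rfl, h, by simp [aOf, tOf]⟩
  · rw [dualFace_oth1] at hg
    exact ⟨1, 1, Or.inr (Or.inl ⟨rfl, rfl⟩), h, by rw [hg]; simp [aOf, tOf]⟩
  · rw [dualFace_oth2] at hg
    exact ⟨2, 2, Or.inr (Or.inr ⟨rfl, rfl⟩), h, by rw [hg]; simp [aOf, tOf]⟩

lemma Nfun_sub (i : Fin 3) (x y : Z3) : Nfun i (x - y) = Nfun i x - Nfun i y := by
  fin_cases i <;>
    · refine z3ext ?_ ?_ ?_ <;> simp [Nfun] <;> ring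

/-- if two children touch, the parents touch, or the plane is contradicted,
or we are in the special corner configuration -/
lemma child_touch {w : R3} (hw : WOrd w) {i : Fin 3} {x x' : Z3} {τ τ' : Fin 3}
    (hp : (x, τ) ∈ stepped w) (hp' : (x', τ') ∈ stepped w)
    {g g' : Face} (hg : g ∈ dualFace i (x, τ)) (hg' : g' ∈ dualFace i (x', τ'))
    (ht : (faceGeom g ∩ faceGeom g').Nonempty) :
    (faceGeom (x, τ) ∩ faceGeom (x', τ')).Nonempty ∨
    (τ = i ∧ τ' = i ∧ (x - x' = badU i ∨ x - x' = -badU i)) := by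
  obtain ⟨β, c, hcom, hτ, rfl⟩ := child_split hg
  obtain ⟨β', c', hcom', hτ', rfl⟩ := child_split hg'
  rw [faceTouch] at ht
  set D : Z3 := (Nfun i x + aOf β) - (Nfun i x' + aOf β') with hD
  have hDb : ∀ j, -1 ≤ D j ∧ D j ≤ 1 := ht.1
  have hv : ∃ v : Fin 3 → Fin 3, (fun j => ((v j : ℤ) - 1)) = D := by
    refine ⟨fun j => ⟨(D j + 1).toNat, ?_⟩, ?_⟩
    · have := hDb j; omega
    · funext j
      have := hDb j
      simp only [Fin.val_mk]
      omega
  obtain ⟨v, hveq⟩ := hv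
  have hMt : Mtfun i (((fun j => (v j : ℤ) - 1) : Z3) - aOf β + aOf β') = x - x' := by
    rw [hveq, hD]
    have : Nfun i x + aOf β - (Nfun i x' + aOf β') - aOf β + aOf β' = Nfun i (x - x') := by
      rw [Nfun_sub]; abel
    rw [this, Mtfun_Nfun]
  have hTD : TouchD (fun j => (v j : ℤ) - 1) c c' := by rw [hveq]; exact ht
  rcases touch_core i β β' c c' v hcom hcom' hTD with hc | hc | hc
  · rw [hMt] at hc
    left
    rw [hτ, hτ', faceTouch]
    exact hc
  · rw [hMt] at hc
    exfalso
    have hx' : (x + -(x - x'), τ') ∈ stepped w := by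
      have : x + -(x - x') = x' := by abel
      rw [this]; exact hp'
    exact stepped_contra hw _ hp hx' (by rw [hτ, hτ']; exact hc)
  · rw [hMt] at hc
    right
    obtain ⟨hβ, hβ', hu⟩ := hc
    refine ⟨?_, ?_, hu⟩
    · rw [hτ, hβ]; rfl
    · rw [hτ', hβ']; rfl

end AnnAux
namespace AnnAux

lemma mem_patGeom {S : Set Face} {f : Face} {q : R3} (hq : q ∈ faceGeom f) (hf : f ∈ S) :
    q ∈ patGeom S := Set.mem_biUnion hf hq

section Geom

variable {w : R3} (hw : WOrd w) {P A : Set Face} (hP : P ⊆ stepped w) (hA : A ⊆ stepped w)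
  (h6 : patGeom P ∩ closure (patGeom (stepped w \ (P ∪ A))) = ∅)
  (hstrong : ∀ X ∈ Ledge, ∀ t : Z3, translatePat t X ⊆ A →
    ∃ Y ∈ LFS, ∃ s : Z3, translatePat t X ⊆ translatePat s Y ∧ translatePat s Y ⊆ A)
  (hAP : A ∩ P = ∅)

include h6 in
lemma no_PΩ_touch {pf of : Face} (hpf : pf ∈ P) (hof : of ∈ stepped w \ (P ∪ A))
    (ht : (faceGeom pf ∩ faceGeom of).Nonempty) : False := by
  obtain ⟨q, hq1, hq2⟩ := ht
  have : q ∈ patGeom P ∩ closure (patGeom (stepped w \ (P ∪ A))) :=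
    ⟨mem_patGeom hq1 hpf, subset_closure (mem_patGeom hq2 hof)⟩
  rw [h6] at this
  exact this

include h6 in
lemma mem_A_of_touch {pf of B : Face} (hpf : pf ∈ P) (hof : of ∈ stepped w \ (P ∪ A))
    (hBΓ : B ∈ stepped w)
    (ht1 : (faceGeom B ∩ faceGeom pf).Nonempty)
    (ht2 : (faceGeom B ∩ faceGeom of).Nonempty) : B ∈ A := by
  by_cases hBP : B ∈ P
  · exact absurd (no_PΩ_touch h6 hBP hof ht2) not_false
  by_cases hBA : B ∈ A
  · exact hBA
  have hBΩ : B ∈ stepped w \ (P ∪ A) := ⟨hBΓ, fun h => h.elim hBP hBA⟩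
  obtain ⟨q, hq1, hq2⟩ := ht1
  exact absurd (no_PΩ_touch h6 hpf hBΩ ⟨q, hq2, hq1⟩) not_false

include hw hP hA h6 hstrong hAP in
lemma bad_case (i : Fin 3) {v : Z3}
    (hq : ((v + badU i, i) ∈ P ∧ (v, i) ∈ stepped w \ (P ∪ A)) ∨
          ((v + badU i, i) ∈ stepped w \ (P ∪ A) ∧ (v, i) ∈ P)) : False := by
  obtain ⟨hw0, h01, h12, h2w⟩ := hw
  have key : ∀ (B1pos B3pos : Z3) (bc : Fin 3) (q1f q2f : Face),
      ((q1f ∈ P ∧ q2f ∈ stepped w \ (P ∪ A)) ∨ (q1f ∈ stepped w \ (P ∪ A) ∧ q2f ∈ P)) →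
      (B1pos, bc) ∈ stepped w → (B3pos, bc) ∈ stepped w →
      (faceGeom (B1pos, bc) ∩ faceGeom q1f).Nonempty →
      (faceGeom (B1pos, bc) ∩ faceGeom q2f).Nonempty →
      (faceGeom (B3pos, bc) ∩ faceGeom q1f).Nonempty →
      (faceGeom (B3pos, bc) ∩ faceGeom q2f).Nonempty →
      ((B1pos, bc) ∈ A → (B3pos, bc) ∈ A → q2f ∈ A) → False := by
    intro B1pos B3pos bc q1f q2f hqq hB1Γ hB3Γ t11 t12 t31 t32 hthird
    have hB1A : (B1pos, bc) ∈ A := by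
      rcases hqq with ⟨hpf, hof⟩ | ⟨hof, hpf⟩
      · exact mem_A_of_touch h6 hpf hof hB1Γ t11 t12
      · exact mem_A_of_touch h6 hpf hof hB1Γ t12 t11
    have hB3A : (B3pos, bc) ∈ A := by
      rcases hqq with ⟨hpf, hof⟩ | ⟨hof, hpf⟩
      · exact mem_A_of_touch h6 hpf hof hB3Γ t31 t32
      · exact mem_A_of_touch h6 hpf hof hB3Γ t32 t31
    have hvA : q2f ∈ A := hthird hB1A hB3A
    rcases hqq with ⟨_, hof⟩ | ⟨_, hpf⟩
    · exact hof.2 (Or.inr hvA)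
    · have : q2f ∈ A ∩ P := ⟨hvA, hpf⟩
      rw [hAP] at this
      exact this
  fin_cases i
  · replace hq : ((v + ![1,1,-1], (0 : Fin 3)) ∈ P ∧
        (v, (0 : Fin 3)) ∈ stepped w \ (P ∪ A)) ∨
        ((v + ![1,1,-1], (0 : Fin 3)) ∈ stepped w \ (P ∪ A) ∧ (v, (0 : Fin 3)) ∈ P) := hq
    have hm1 : (v + ![1,1,-1], (0 : Fin 3)) ∈ stepped w := by
      rcases hq with ⟨h, _⟩ | ⟨h, _⟩; exacts [hP h, h.1]
    have hm2 : (v, (0 : Fin 3)) ∈ stepped w := by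
      rcases hq with ⟨_, h⟩ | ⟨_, h⟩; exacts [h.1, hP h]
    obtain ⟨hs0, hs1⟩ := mem_stepped.1 hm2
    obtain ⟨ht0, ht1⟩ := mem_stepped.1 hm1
    rw [dot3_add] at ht0 ht1
    have e1' : dot3 ![1,1,-1] w = w 0 + w 1 - w 2 := by simp [dot3_explicit]; ring
    have e2' : dot3 ![0,1,0] w = w 1 := by simp [dot3_explicit]
    rw [e1'] at ht0 ht1
    refine key v (v + ![0,1,0]) 2 (v + ![1,1,-1], 0) (v, 0) hq ?_ ?_ ?_ ?_ ?_ ?_ ?_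
    · exact ⟨hs0, by show dot3 v w < w 2; linarith⟩
    · refine ⟨?_, ?_⟩
      · show 0 ≤ dot3 (v + ![0,1,0]) w
        rw [dot3_add, e2']; linarith
      · show dot3 (v + ![0,1,0]) w < w 2
        rw [dot3_add, e2']; linarith
    · exact faceTouch.mpr (by rw [show v - (v + ![1,1,-1]) = -![1,1,-1] by abel]; decide)
    · exact faceTouch.mpr (by rw [sub_self]; decide)
    · exact faceTouch.mpr
        (by rw [show v + ![0,1,0] - (v + ![1,1,-1]) = ![0,1,0] - ![1,1,-1] by abel]; decide)
    · exact faceTouch.mpr (by rw [show v + ![0,1,0] - v = ![0,1,0] by abel]; decide)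
    · intro hB1 hB3
      exact third_of core3 hstrong (by simp [Ledge]) hB1 hB3
  · replace hq : ((v + ![1,1,-1], (1 : Fin 3)) ∈ P ∧
        (v, (1 : Fin 3)) ∈ stepped w \ (P ∪ A)) ∨
        ((v + ![1,1,-1], (1 : Fin 3)) ∈ stepped w \ (P ∪ A) ∧ (v, (1 : Fin 3)) ∈ P) := hq
    have hm1 : (v + ![1,1,-1], (1 : Fin 3)) ∈ stepped w := by
      rcases hq with ⟨h, _⟩ | ⟨h, _⟩; exacts [hP h, h.1]
    have hm2 : (v, (1 : Fin 3)) ∈ stepped w := by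
      rcases hq with ⟨_, h⟩ | ⟨_, h⟩; exacts [h.1, hP h]
    obtain ⟨hs0, hs1⟩ := mem_stepped.1 hm2
    obtain ⟨ht0, ht1⟩ := mem_stepped.1 hm1
    rw [dot3_add] at ht0 ht1
    have e1' : dot3 ![1,1,-1] w = w 0 + w 1 - w 2 := by simp [dot3_explicit]; ring
    have e2' : dot3 ![1,0,0] w = w 0 := by simp [dot3_explicit]
    rw [e1'] at ht0 ht1
    refine key v (v + ![1,0,0]) 2 (v + ![1,1,-1], 1) (v, 1) hq ?_ ?_ ?_ ?_ ?_ ?_ ?_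
    · exact ⟨hs0, by show dot3 v w < w 2; linarith⟩
    · refine ⟨?_, ?_⟩
      · show 0 ≤ dot3 (v + ![1,0,0]) w
        rw [dot3_add, e2']; linarith
      · show dot3 (v + ![1,0,0]) w < w 2
        rw [dot3_add, e2']; linarith
    · exact faceTouch.mpr (by rw [show v - (v + ![1,1,-1]) = -![1,1,-1] by abel]; decide)
    · exact faceTouch.mpr (by rw [sub_self]; decide)
    · exact faceTouch.mpr
        (by rw [show v + ![1,0,0] - (v + ![1,1,-1]) = ![1,0,0] - ![1,1,-1] by abel]; decide)
    · exact faceTouch.mpr (by rw [show v + ![1,0,0] - v = ![1,0,0] by abel]; decide)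
    · intro hB1 hB3
      exact third_of core2 hstrong (by simp [Ledge]) hB1 hB3
  · replace hq : ((v + ![1,-1,1], (2 : Fin 3)) ∈ P ∧
        (v, (2 : Fin 3)) ∈ stepped w \ (P ∪ A)) ∨
        ((v + ![1,-1,1], (2 : Fin 3)) ∈ stepped w \ (P ∪ A) ∧ (v, (2 : Fin 3)) ∈ P) := hq
    have hm1 : (v + ![1,-1,1], (2 : Fin 3)) ∈ stepped w := by
      rcases hq with ⟨h, _⟩ | ⟨h, _⟩; exacts [hP h, h.1]
    have hm2 : (v, (2 : Fin 3)) ∈ stepped w := by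
      rcases hq with ⟨_, h⟩ | ⟨_, h⟩; exacts [h.1, hP h]
    obtain ⟨hs0, hs1⟩ := mem_stepped.1 hm2
    obtain ⟨ht0, ht1⟩ := mem_stepped.1 hm1
    rw [dot3_add] at ht0 ht1
    have e1' : dot3 ![1,-1,1] w = w 0 - w 1 + w 2 := by simp [dot3_explicit]; ring
    have e2' : dot3 ![1,0,0] w = w 0 := by simp [dot3_explicit]
    rw [e1'] at ht0 ht1
    refine key v (v + ![1,0,0]) 1 (v + ![1,-1,1], 2) (v, 2) hq ?_ ?_ ?_ ?_ ?_ ?_ ?_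
    · exact ⟨hs0, by show dot3 v w < w 1; linarith⟩
    · refine ⟨?_, ?_⟩
      · show 0 ≤ dot3 (v + ![1,0,0]) w
        rw [dot3_add, e2']; linarith
      · show dot3 (v + ![1,0,0]) w < w 1
        rw [dot3_add, e2']; linarith
    · exact faceTouch.mpr (by rw [show v - (v + ![1,-1,1]) = -![1,-1,1] by abel]; decide)
    · exact faceTouch.mpr (by rw [sub_self]; decide)
    · exact faceTouch.mpr
        (by rw [show v + ![1,0,0] - (v + ![1,-1,1]) = ![1,0,0] - ![1,-1,1] by abel]; decide)
    · exact faceTouch.mpr (by rw [show v + ![1,0,0] - v = ![1,0,0] by abel]; decide)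
    · intro hB1 hB3
      exact third_of core1 hstrong (by simp [Ledge]) hB1 hB3

include hw hP hA h6 hstrong hAP in
lemma image_sep (i : Fin 3) :
    patGeom (dualPat i P) ∩
      closure (patGeom (dualPat i (stepped w) \ (dualPat i P ∪ dualPat i A))) = ∅ := by
  have hPA : P ∪ A ⊆ stepped w := Set.union_subset hP hA
  have hsetid : dualPat i (stepped w) \ (dualPat i P ∪ dualPat i A) =
      dualPat i (stepped w \ (P ∪ A)) := by
    rw [← dualPat_union, dualPat_diff hw i hPA]
  rw [hsetid, (patGeom_closed _).closure_eq]
  ext q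
  simp only [Set.mem_inter_iff, Set.mem_empty_iff_false, iff_false]
  rintro ⟨hq1, hq2⟩
  obtain ⟨g, hgP, hqg⟩ := Set.mem_iUnion₂.1 hq1
  obtain ⟨g', hgΩ, hqg'⟩ := Set.mem_iUnion₂.1 hq2
  obtain ⟨p, hpP, hgp⟩ := mem_dualPat.1 hgP
  obtain ⟨p', hpΩ, hgp'⟩ := mem_dualPat.1 hgΩ
  obtain ⟨x, τ⟩ := p
  obtain ⟨x', τ'⟩ := p'
  have ht : (faceGeom g ∩ faceGeom g').Nonempty := ⟨q, hqg, hqg'⟩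
  rcases child_touch hw (hP hpP) hpΩ.1 hgp hgp' ht with hc | ⟨hτ, hτ', hu⟩
  · exact no_PΩ_touch h6 hpP hpΩ hc
  · rw [hτ] at hpP
    rw [hτ'] at hpΩ
    rcases hu with hu | hu
    · have hx : x = x' + badU i := by rw [← hu]; abel
      rw [hx] at hpP
      exact bad_case hw hP hA h6 hstrong hAP i (Or.inl ⟨hpP, hpΩ⟩)
    · have hu' : x' - x = badU i := by
        rw [show x' - x = -(x - x') by abel, hu, neg_neg]
      have hx' : x' = x + badU i := by rw [← hu']; abel
      rw [hx'] at hpΩ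
      exact bad_case hw hP hA h6 hstrong hAP i (Or.inr ⟨hpΩ, hpP⟩)

end Geom

end AnnAux
/-- If `Γ = Γ_w` avoids the four forbidden patterns and `A ⊆ Γ` is an
`L_FS`-annulus of a pattern `P ⊆ Γ` in `Γ`, then `Σᵢ(A)` is an `L_FS`-annulus of
`Σᵢ(P)` in `Σᵢ(Γ)`. -/
theorem annulus_image (w : R3) (hw : ∀ i, 0 ≤ w i)
    (havoid : ∀ X ∈ Forbidden, ∀ t : Z3, ¬ translatePat t X ⊆ stepped w)
    (P A : Set Face) (hP : P ⊆ stepped w) (hA : A ⊆ stepped w)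
    (h : IsAnnulus (stepped w) P A) (i : Fin 3) :
    IsAnnulus (dualPat i (stepped w)) (dualPat i P) (dualPat i A) := by
  obtain ⟨h1, h2, h3, h4, h5, h6⟩ := h
  have hw' : AnnAux.WOrd w := AnnAux.word_of_avoid hw havoid
  refine ⟨?_, ?_, ?_, ?_, ?_, ?_⟩
  · exact AnnAux.covered_dualPat i h1
  · rw [← AnnAux.dualPat_union]
    exact AnnAux.covered_dualPat i h2
  · have hid : dualPat i (stepped w) \ (dualPat i A ∪ dualPat i P) =
        dualPat i (stepped w \ (A ∪ P)) := by
      rw [← AnnAux.dualPat_union, AnnAux.dualPat_diff hw' i (Set.union_subset hA hP)]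
    rw [hid]
    exact AnnAux.covered_dualPat i h3
  · exact AnnAux.strongly_dualPat hw' havoid hA h4 i
  · exact AnnAux.dualPat_inter_empty hw' i hA hP h5
  · exact AnnAux.image_sep hw' hP hA h6 h4.2 h5 i
end
end

section
/- Let v ∈ O₃⁺ with v ≠ 0 and set ξ(v) = min{vᵢ : vᵢ ≠ 0}. If ω ≥ ‖v‖∞ + ξ(v), then the arithmetical discrete plane P(v,ω) is 2-connected. Consequently Ω(v) ≤ ‖v‖∞ + ξ(v). -/
open Matrix
open scoped Classical

noncomputable section

/-- `ξ(v) = min {vᵢ : vᵢ ≠ 0}`, the smallest non-zero coordinate. -/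
def xiMin (v : R3) : ℝ := sInf {r : ℝ | (∃ i : Fin 3, r = v i) ∧ r ≠ 0}



lemma adj3_symm' {x y : Z3} (h : adj3 x y) : adj3 y x := by
  unfold adj3 at h ⊢
  simpa [abs_sub_comm] using h

lemma chain_mem {A : Set Z3} {x y : Z3} (hx : x ∈ A)
    (h : Relation.ReflTransGen (fun a b => b ∈ A ∧ adj3 a b) x y) : y ∈ A := by
  induction h with
  | refl => exact hx
  | tail _ h2 _ => exact h2.1

lemma chain_symm {A : Set Z3} {x y : Z3} (hx : x ∈ A)
    (h : Relation.ReflTransGen (fun a b => b ∈ A ∧ adj3 a b) x y) :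
    Relation.ReflTransGen (fun a b => b ∈ A ∧ adj3 a b) y x := by
  induction h with
  | refl => exact .refl
  | @tail b c h1 h2 ih =>
    exact Relation.ReflTransGen.head ⟨chain_mem hx h1, adj3_symm' h2.2⟩ ih

lemma eta3 (x : Z3) : x = ![x 0, x 1, x 2] := by
  funext i; fin_cases i <;> rfl

lemma dot3_cons (v : R3) (a b c : ℤ) :
    dot3 ![a, b, c] v = (a : ℝ) * v 0 + (b : ℝ) * v 1 + (c : ℝ) * v 2 := by
  simp [dot3, Fin.sum_univ_three]

lemma adj_e0 (a b c : ℤ) : adj3 ![a, b, c] ![a + 1, b, c] := by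
  unfold adj3
  rw [Fin.sum_univ_three]
  simp

lemma adj_e1 (a b c : ℤ) : adj3 ![a, b, c] ![a, b + 1, c] := by
  unfold adj3
  rw [Fin.sum_univ_three]
  simp

lemma adj_e2_down (a b c : ℤ) : adj3 ![a, b, c + 1] ![a, b, c] := by
  unfold adj3
  rw [Fin.sum_univ_three]
  simp

structure Good (v : R3) (ω ξ : ℝ) : Prop where
  h0 : 0 ≤ v 0
  h01 : v 0 ≤ v 1
  h12 : v 1 ≤ v 2
  h2 : 0 < v 2
  hxi : 0 < ξ
  h0xi : v 0 ≤ ξ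
  h1xi : v 0 = 0 → v 1 ≤ ξ
  hom : v 2 + ξ ≤ ω

def tIdx (v : R3) (a b : ℤ) : ℤ := -⌊((a : ℝ) * v 0 + (b : ℝ) * v 1) / v 2⌋
def gHt (v : R3) (a b : ℤ) : ℝ :=
  ((a : ℝ) * v 0 + (b : ℝ) * v 1) - (⌊((a : ℝ) * v 0 + (b : ℝ) * v 1) / v 2⌋ : ℤ) * v 2
def sPt (v : R3) (a b : ℤ) : Z3 := ![a, b, tIdx v a b]

lemma ht_s (v : R3) (a b k : ℤ) :
    dot3 ![a, b, tIdx v a b + k] v = gHt v a b + (k : ℝ) * v 2 := by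
  rw [dot3_cons]; unfold gHt tIdx; push_cast; ring

lemma gHt_nonneg {v : R3} (h2 : 0 < v 2) (a b : ℤ) : 0 ≤ gHt v a b := by
  unfold gHt
  have h := Int.floor_le (((a : ℝ) * v 0 + (b : ℝ) * v 1) / v 2)
  have := (le_div_iff₀ h2).mp h
  linarith

lemma gHt_lt {v : R3} (h2 : 0 < v 2) (a b : ℤ) : gHt v a b < v 2 := by
  unfold gHt
  have h := Int.lt_floor_add_one (((a : ℝ) * v 0 + (b : ℝ) * v 1) / v 2)
  have := (div_lt_iff₀ h2).mp h
  linarith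

variable {v : R3} {ω ξ : ℝ}

lemma sPt_mem (H : Good v ω ξ) (a b : ℤ) : sPt v a b ∈ Plane v ω := by
  have h := ht_s v a b 0
  rw [add_zero] at h
  have h1 := gHt_nonneg H.h2 a b
  have h2 := gHt_lt H.h2 a b
  constructor
  · rw [show sPt v a b = ![a, b, tIdx v a b] from rfl, h]; push_cast; linarith
  · rw [show sPt v a b = ![a, b, tIdx v a b] from rfl, h]; push_cast
    have := H.hxi; have := H.hom; linarith

lemma descend (H : Good v ω ξ) (a b : ℤ) (n : ℕ)
    (hx : ![a, b, tIdx v a b + (n : ℤ)] ∈ Plane v ω) :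
    Relation.ReflTransGen (fun p q => q ∈ Plane v ω ∧ adj3 p q)
      ![a, b, tIdx v a b + (n : ℤ)] (sPt v a b) := by
  induction n with
  | zero =>
    rw [show tIdx v a b + ((0 : ℕ) : ℤ) = tIdx v a b by push_cast; ring]
    exact .refl
  | succ n ih =>
    have hy : ![a, b, tIdx v a b + (n : ℤ)] ∈ Plane v ω := by
      constructor
      · rw [ht_s]
        push_cast
        have h1 := gHt_nonneg H.h2 a b
        have h3 : (0:ℝ) ≤ (n : ℝ) * v 2 := mul_nonneg (Nat.cast_nonneg n) H.h2.le
        linarith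
      · have hxlt := hx.2
        rw [ht_s] at hxlt
        rw [ht_s]
        push_cast at hxlt ⊢
        have := H.h2
        linarith
    have hadj : adj3 ![a, b, tIdx v a b + ((n : ℤ) + 1)] ![a, b, tIdx v a b + (n : ℤ)] := by
      have := adj_e2_down a b (tIdx v a b + (n : ℤ))
      rw [show tIdx v a b + (n : ℤ) + 1 = tIdx v a b + ((n : ℤ) + 1) by ring] at this
      exact this
    have hx' : ![a, b, tIdx v a b + ((n : ℕ) + 1 : ℤ)] ∈ Plane v ω := by
      rw [show ((n : ℕ) + 1 : ℤ) = ((n + 1 : ℕ) : ℤ) by push_cast; ring]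
      exact hx
    refine Relation.ReflTransGen.head ⟨hy, ?_⟩ (ih hy)
    rw [show (((n+1 : ℕ)) : ℤ) = ((n : ℤ) + 1) by push_cast; ring]
    exact hadj

lemma exists_n (H : Good v ω ξ) {x : Z3} (hx : x ∈ Plane v ω) :
    ∃ n : ℕ, x 2 = tIdx v (x 0) (x 1) + (n : ℤ) := by
  set a := x 0; set b := x 1
  have hxe : x = ![a, b, x 2] := eta3 x
  have hd : dot3 x v = gHt v a b + ((x 2 - tIdx v a b : ℤ) : ℝ) * v 2 := by
    have h := ht_s v a b (x 2 - tIdx v a b)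
    rw [show tIdx v a b + (x 2 - tIdx v a b) = x 2 by ring] at h
    rw [← h]
    conv_lhs => rw [hxe]
  have hk : 0 ≤ x 2 - tIdx v a b := by
    by_contra hneg
    push_neg at hneg
    have h1 : (x 2 - tIdx v a b : ℤ) ≤ -1 := by omega
    have h1' : ((x 2 - tIdx v a b : ℤ) : ℝ) ≤ -1 := by exact_mod_cast h1
    have hg := gHt_lt H.h2 a b
    have h2 := H.h2
    have := hx.1
    rw [hd] at this
    nlinarith
  exact ⟨(x 2 - tIdx v a b).toNat, by omega⟩

lemma to_graph (H : Good v ω ξ) {x : Z3} (hx : x ∈ Plane v ω) :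
    Relation.ReflTransGen (fun p q => q ∈ Plane v ω ∧ adj3 p q)
      x (sPt v (x 0) (x 1)) := by
  obtain ⟨n, hn⟩ := exists_n H hx
  have hx2 : ![x 0, x 1, tIdx v (x 0) (x 1) + (n : ℤ)] = x := by
    conv_rhs => rw [eta3 x]
    rw [hn]
  have hmem : ![x 0, x 1, tIdx v (x 0) (x 1) + (n : ℤ)] ∈ Plane v ω := by rw [hx2]; exact hx
  have h := descend H (x 0) (x 1) n hmem
  exact hx2 ▸ h

lemma conn_right (H : Good v ω ξ) (a b : ℤ) :
    Relation.ReflTransGen (fun p q => q ∈ Plane v ω ∧ adj3 p q)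
      (sPt v a b) (sPt v (a + 1) b) := by
  set y : Z3 := ![a + 1, b, tIdx v a b] with hy
  have hdy : dot3 y v = gHt v a b + v 0 := by
    rw [hy, dot3_cons]
    have := ht_s v a b 0
    rw [add_zero] at this
    rw [dot3_cons] at this
    push_cast at this ⊢
    linarith
  have hymem : y ∈ Plane v ω := by
    constructor
    · rw [hdy]; linarith [gHt_nonneg H.h2 a b, H.h0]
    · rw [hdy]; linarith [gHt_lt H.h2 a b, H.h0xi, H.hom]
  have hadj : adj3 (sPt v a b) y := adj_e0 a b (tIdx v a b)
  have h2 := to_graph H hymem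
  have hy0 : y 0 = a + 1 := rfl
  have hy1 : y 1 = b := rfl
  rw [hy0, hy1] at h2
  exact Relation.ReflTransGen.head ⟨hymem, hadj⟩ h2

lemma conn_left (H : Good v ω ξ) (a b : ℤ) :
    Relation.ReflTransGen (fun p q => q ∈ Plane v ω ∧ adj3 p q)
      (sPt v (a + 1) b) (sPt v a b) :=
  chain_symm (sPt_mem H a b) (conn_right H a b)

lemma row_to_zero (H : Good v ω ξ) (b : ℤ) : ∀ a : ℤ,
    Relation.ReflTransGen (fun p q => q ∈ Plane v ω ∧ adj3 p q)
      (sPt v a b) (sPt v 0 b) := by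
  intro a
  induction a using Int.induction_on with
  | zero => exact .refl
  | succ k ih => exact (conn_left H k b).trans ih
  | pred k ih =>
    have h := conn_right H (-(k : ℤ) - 1) b
    rw [show (-(k : ℤ) - 1 + 1) = -(k : ℤ) by ring] at h
    exact h.trans ih

lemma row_conn (H : Good v ω ξ) (a a' b : ℤ) :
    Relation.ReflTransGen (fun p q => q ∈ Plane v ω ∧ adj3 p q)
      (sPt v a b) (sPt v a' b) :=
  (row_to_zero H b a).trans (chain_symm (sPt_mem H a' b) (row_to_zero H b a'))

lemma cross (H : Good v ω ξ) (b : ℤ) : ∃ a : ℤ,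
    Relation.ReflTransGen (fun p q => q ∈ Plane v ω ∧ adj3 p q)
      (sPt v a b) (sPt v a (b + 1)) := by
  have key : ∃ a : ℤ, gHt v a b + v 1 < ω := by
    by_cases h00 : v 0 = 0
    · exact ⟨0, by linarith [gHt_lt H.h2 0 b, H.h1xi h00, H.hom]⟩
    · have hv0 : 0 < v 0 := lt_of_le_of_ne H.h0 (Ne.symm h00)
      refine ⟨-⌊((b : ℝ) * v 1) / v 0⌋, ?_⟩
      set a : ℤ := -⌊((b : ℝ) * v 1) / v 0⌋ with ha
      have hc : (a : ℝ) * v 0 + (b : ℝ) * v 1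
          = (b : ℝ) * v 1 - (⌊((b : ℝ) * v 1) / v 0⌋ : ℤ) * v 0 := by
        rw [ha]; push_cast; ring
      have hc0 : 0 ≤ (a : ℝ) * v 0 + (b : ℝ) * v 1 := by
        rw [hc]
        have h := Int.floor_le (((b : ℝ) * v 1) / v 0)
        have := (le_div_iff₀ hv0).mp h
        linarith
      have hc1 : (a : ℝ) * v 0 + (b : ℝ) * v 1 < v 0 := by
        rw [hc]
        have h := Int.lt_floor_add_one (((b : ℝ) * v 1) / v 0)
        have := (div_lt_iff₀ hv0).mp h
        linarith
      have hfl : ⌊((a : ℝ) * v 0 + (b : ℝ) * v 1) / v 2⌋ = 0 := by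
        rw [Int.floor_eq_zero_iff]
        constructor
        · exact div_nonneg hc0 H.h2.le
        · rw [div_lt_one H.h2]
          linarith [H.h01, H.h12]
      have hg : gHt v a b < v 0 := by
        unfold gHt
        rw [hfl]
        push_cast
        linarith
      linarith [H.h0xi, H.h12, H.hom]
  obtain ⟨a, hga⟩ := key
  set y : Z3 := ![a, b + 1, tIdx v a b] with hy
  have hdy : dot3 y v = gHt v a b + v 1 := by
    rw [hy, dot3_cons]
    have := ht_s v a b 0
    rw [add_zero, dot3_cons] at this
    push_cast at this ⊢
    linarith
  have hymem : y ∈ Plane v ω := by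
    constructor
    · rw [hdy]; linarith [gHt_nonneg H.h2 a b, H.h0, H.h01]
    · rw [hdy]; exact hga
  have hadj : adj3 (sPt v a b) y := adj_e1 a b (tIdx v a b)
  have h2 := to_graph H hymem
  have hy0 : y 0 = a := rfl
  have hy1 : y 1 = b + 1 := rfl
  rw [hy0, hy1] at h2
  exact ⟨a, Relation.ReflTransGen.head ⟨hymem, hadj⟩ h2⟩

lemma sPt_zero (v : R3) : sPt v 0 0 = 0 := by
  have ht : tIdx v 0 0 = 0 := by
    unfold tIdx
    norm_num
  unfold sPt
  rw [ht]
  funext i; fin_cases i <;> rfl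

lemma col_to_zero (H : Good v ω ξ) (b : ℤ) : ∀ a : ℤ,
    Relation.ReflTransGen (fun p q => q ∈ Plane v ω ∧ adj3 p q)
      (sPt v a b) 0 := by
  induction b using Int.induction_on with
  | zero =>
    intro a
    have := row_to_zero H 0 a
    rwa [sPt_zero] at this
  | succ k ih =>
    intro a
    obtain ⟨a₀, hc⟩ := cross H k
    have h1 := row_conn H a a₀ ((k : ℤ) + 1)
    have h2 := chain_symm (sPt_mem H a₀ k) hc
    exact h1.trans (h2.trans (ih a₀))
  | pred k ih =>
    intro a
    obtain ⟨a₀, hc⟩ := cross H (-(k : ℤ) - 1)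
    rw [show (-(k : ℤ) - 1 + 1) = -(k : ℤ) by ring] at hc
    have h1 := row_conn H a a₀ (-(k : ℤ) - 1)
    exact h1.trans (hc.trans (ih a₀))

lemma main_conn (H : Good v ω ξ) : Connected3 (Plane v ω) := by
  have h0mem : (0 : Z3) ∈ Plane v ω := by
    have hd : dot3 0 v = 0 := by simp [dot3]
    refine ⟨le_of_eq hd.symm, ?_⟩
    rw [hd]; linarith [H.h2, H.hxi, H.hom]
  have key : ∀ x ∈ Plane v ω,
      Relation.ReflTransGen (fun p q => q ∈ Plane v ω ∧ adj3 p q) x 0 := by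
    intro x hx
    exact (to_graph H hx).trans (col_to_zero H (x 1) (x 0))
  exact ⟨⟨0, h0mem⟩, fun x hx y hy => (key x hx).trans (chain_symm hy (key y hy))⟩


/-- For `v ∈ O₃⁺`, `v ≠ 0`: if `ω ≥ ‖v‖∞ + ξ(v)` then `P(v,ω)` is
2-connected; consequently `Ω(v) ≤ ‖v‖∞ + ξ(v)`. -/
theorem omega_upper_bound (v : R3) (hv : v ∈ O3) (hne : v ≠ 0) :
    (∀ ω : ℝ, max (v 0) (max (v 1) (v 2)) + xiMin v ≤ ω → Connected3 (Plane v ω)) ∧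
    omegaConn v ≤ max (v 0) (max (v 1) (v 2)) + xiMin v := by
  obtain ⟨h0, h01, h12⟩ := hv
  have h2 : 0 < v 2 := by
    rcases lt_or_eq_of_le (le_trans h0 (le_trans h01 h12)) with h | h
    · exact h
    · exfalso
      apply hne
      funext i
      fin_cases i
      · show v 0 = 0; linarith
      · show v 1 = 0; linarith
      · show v 2 = 0; linarith
  have hSne : {r : ℝ | (∃ i : Fin 3, r = v i) ∧ r ≠ 0}.Nonempty :=
    ⟨v 2, ⟨2, rfl⟩, ne_of_gt h2⟩
  have h0xi : v 0 ≤ xiMin v := by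
    apply le_csInf hSne
    rintro r ⟨⟨i, rfl⟩, -⟩
    fin_cases i <;> simp <;> linarith
  have h1xi : v 0 = 0 → v 1 ≤ xiMin v := by
    intro h00
    apply le_csInf hSne
    rintro r ⟨⟨i, rfl⟩, hr⟩
    fin_cases i
    · exact absurd h00 hr
    · simp
    · simpa using h12
  have hxi : 0 < xiMin v := by
    by_cases h00 : v 0 = 0
    · by_cases h10 : v 1 = 0
      · have : v 2 ≤ xiMin v := by
          apply le_csInf hSne
          rintro r ⟨⟨i, rfl⟩, hr⟩
          fin_cases i
          · exact absurd h00 hr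
          · exact absurd h10 hr
          · simp
        linarith
      · have hv1 : 0 < v 1 := lt_of_le_of_ne (le_trans h0 h01) (Ne.symm h10)
        linarith [h1xi h00]
    · have hv0 : 0 < v 0 := lt_of_le_of_ne h0 (Ne.symm h00)
      linarith
  have hmax : max (v 0) (max (v 1) (v 2)) = v 2 := by
    rw [max_eq_right h12, max_eq_right (le_trans h01 h12)]
  rw [hmax]
  constructor
  · intro ω hω
    exact main_conn (v := v) (ξ := xiMin v)
      ⟨h0, h01, h12, h2, hxi, h0xi, h1xi, hω⟩
  · apply csInf_le ⟨0, fun x hx => hx.1⟩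
    refine ⟨by linarith, ?_⟩
    exact main_conn (v := v) (ξ := xiMin v)
      ⟨h0, h01, h12, h2, hxi, h0xi, h1xi, le_refl _⟩
end
end

section
/- Let v ∈ O₃⁺ with dim_ℚ(v₁,v₂,v₃) = 2 and v₁ + v₂ ≤ v₃, and suppose there exists n₀ ∈ ℕ with v₁⁽ⁿ⁰⁾ = 0. Then the arithmetical discrete plane P(v, Ω(v)) is 2-connected and Ω(v) = v₃ + gcd(v₁, v₂). -/
open Matrix
open scoped Classical

noncomputable section

/-- The extension of `gcd` to reals `a, b ≥ 0` generating a discrete subgroup: the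
positive generator of `aℤ + bℤ`, i.e. its least positive element. -/
def rgcd (a b : ℝ) : ℝ := sInf {g : ℝ | 0 < g ∧ ∃ m n : ℤ, g = m * a + n * b}



lemma adj_update0 (x : Z3) (e : ℤ) (he : e = 1 ∨ e = -1) :
    adj3 x (Function.update x 0 (x 0 + e)) := by
  unfold adj3
  rw [Fin.sum_univ_three]
  rcases he with rfl | rfl <;> simp [Function.update]

lemma adj_update1 (x : Z3) (e : ℤ) (he : e = 1 ∨ e = -1) :
    adj3 x (Function.update x 1 (x 1 + e)) := by
  unfold adj3
  rw [Fin.sum_univ_three]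
  rcases he with rfl | rfl <;> simp [Function.update]

lemma windowWalk (A : Set Z3) (p q c d k : ℤ) (hp : 0 ≤ p) (hq : 0 ≤ q)
    (hcd : c + p + q ≤ d)
    (hA : ∀ z : Z3, z 2 = k → c ≤ p * z 0 + q * z 1 → p * z 0 + q * z 1 ≤ d → z ∈ A) :
    ∀ n : ℕ, ∀ x y : Z3, x 2 = k → y 2 = k →
    c ≤ p * x 0 + q * x 1 → p * x 0 + q * x 1 ≤ d →
    c ≤ p * y 0 + q * y 1 → p * y 0 + q * y 1 ≤ d →
    (y 0 - x 0).natAbs + (y 1 - x 1).natAbs = n →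
    Relation.ReflTransGen (fun a b => b ∈ A ∧ adj3 a b) x y := by
  intro n
  induction n with
  | zero =>
    intro x y hx2 hy2 _ _ _ _ hm
    have h0 : x 0 = y 0 := by omega
    have h1 : x 1 = y 1 := by omega
    have : x = y := by
      funext i
      fin_cases i <;> simp [h0, h1, hx2, hy2]
    rw [this]
  | succ n ih =>
    intro x y hx2 hy2 hxlo hxhi hylo hyhi hm
    have do0 : ∀ e : ℤ, (e = 1 ∨ e = -1) →
        c ≤ p * (x 0 + e) + q * x 1 → p * (x 0 + e) + q * x 1 ≤ d →
        (y 0 - (x 0 + e)).natAbs + (y 1 - x 1).natAbs = n →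
        Relation.ReflTransGen (fun a b => b ∈ A ∧ adj3 a b) x y := by
      intro e he h1 h2 h3
      have hz0 : (Function.update x 0 (x 0 + e)) 0 = x 0 + e := by simp
      have hz1 : (Function.update x 0 (x 0 + e)) 1 = x 1 := by
        simp [Function.update]
      have hz2 : (Function.update x 0 (x 0 + e)) 2 = k := by
        simpa [Function.update] using hx2
      exact Relation.ReflTransGen.head
        ⟨hA _ hz2 (by rw [hz0, hz1]; exact h1) (by rw [hz0, hz1]; exact h2),
          adj_update0 x e he⟩
        (ih _ _ hz2 hy2 (by rw [hz0, hz1]; exact h1) (by rw [hz0, hz1]; exact h2)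
          hylo hyhi (by rw [hz0, hz1]; exact h3))
    have do1 : ∀ e : ℤ, (e = 1 ∨ e = -1) →
        c ≤ p * x 0 + q * (x 1 + e) → p * x 0 + q * (x 1 + e) ≤ d →
        (y 0 - x 0).natAbs + (y 1 - (x 1 + e)).natAbs = n →
        Relation.ReflTransGen (fun a b => b ∈ A ∧ adj3 a b) x y := by
      intro e he h1 h2 h3
      have hz0 : (Function.update x 1 (x 1 + e)) 0 = x 0 := by
        simp [Function.update]
      have hz1 : (Function.update x 1 (x 1 + e)) 1 = x 1 + e := by simp
      have hz2 : (Function.update x 1 (x 1 + e)) 2 = k := by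
        simpa [Function.update] using hx2
      exact Relation.ReflTransGen.head
        ⟨hA _ hz2 (by rw [hz0, hz1]; exact h1) (by rw [hz0, hz1]; exact h2),
          adj_update1 x e he⟩
        (ih _ _ hz2 hy2 (by rw [hz0, hz1]; exact h1) (by rw [hz0, hz1]; exact h2)
          hylo hyhi (by rw [hz0, hz1]; exact h3))
    have key : p * (y 0 - x 0) + q * (y 1 - x 1)
        = (p * y 0 + q * y 1) - (p * x 0 + q * x 1) := by ring
    rcases lt_trichotomy (x 0) (y 0) with h0 | h0 | h0
    · rcases le_or_gt (x 1) (y 1) with h1 | h1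
      · -- A0 > 0, A1 ≥ 0 : move +x0
        have f1 : p * 1 ≤ p * (y 0 - x 0) := by
          apply mul_le_mul_of_nonneg_left (by omega) hp
        have f2 : 0 ≤ q * (y 1 - x 1) := mul_nonneg hq (by omega)
        exact do0 1 (Or.inl rfl) (by linarith) (by linarith) (by omega)
      · -- A0 > 0, A1 < 0
        by_cases hsp : p * (x 0 + 1) + q * x 1 ≤ d
        · exact do0 1 (Or.inl rfl) (by linarith) hsp (by omega)
        · -- s + p > d ⇒ move -x1
          push_neg at hsp
          exact do1 (-1) (Or.inr rfl) (by linarith) (by linarith) (by omega)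
    · rcases lt_trichotomy (x 1) (y 1) with h1 | h1 | h1
      · -- A0 = 0, A1 > 0 : move +x1
        have f1 : q * 1 ≤ q * (y 1 - x 1) := by
          apply mul_le_mul_of_nonneg_left (by omega) hq
        exact do1 1 (Or.inl rfl) (by linarith [key, h0]) (by nlinarith [key]) (by omega)
      · omega
      · -- A0 = 0, A1 < 0 : move -x1
        have f1 : q * (y 1 - x 1) ≤ q * (-1) := by
          apply mul_le_mul_of_nonneg_left (by omega) hq
        exact do1 (-1) (Or.inr rfl) (by nlinarith [key]) (by linarith) (by omega)
    · rcases le_or_gt (y 1) (x 1) with h1 | h1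
      · -- A0 < 0, A1 ≤ 0 : move -x0
        have f1 : p * (y 0 - x 0) ≤ p * (-1) := by
          apply mul_le_mul_of_nonneg_left (by omega) hp
        have f2 : q * (y 1 - x 1) ≤ 0 := by
          have := mul_le_mul_of_nonneg_left (show y 1 - x 1 ≤ 0 by omega) hq
          simpa using this
        exact do0 (-1) (Or.inr rfl) (by nlinarith [key]) (by linarith) (by omega)
      · -- A0 < 0, A1 > 0
        by_cases hsp : c ≤ p * (x 0 + -1) + q * x 1
        · exact do0 (-1) (Or.inr rfl) hsp (by linarith) (by omega)
        · push_neg at hsp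
          exact do1 1 (Or.inl rfl) (by linarith) (by linarith) (by omega)


lemma FS_step (u : R3) (hu : u ∈ O3) (hs : u 0 + u 1 ≤ u 2) :
    FS u ∈ O3 ∧ (FS u) 0 + (FS u) 1 ≤ (FS u) 2 ∧
    (((FS u) 0 = u 0 ∧ (FS u) 1 = u 1 - u 0) ∨ ((FS u) 0 = u 1 - u 0 ∧ (FS u) 1 = u 0)) := by
  obtain ⟨h1, h2, h3⟩ := hu
  unfold FS
  split_ifs with hc1 hc2
  · refine ⟨⟨by simpa using h1, ?_, ?_⟩, ?_, Or.inl ⟨rfl, rfl⟩⟩ <;> simp <;> linarith [hc1.1, hc1.2]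
  · refine ⟨⟨?_, ?_, ?_⟩, ?_, Or.inr ⟨rfl, rfl⟩⟩ <;> simp <;> linarith [hc2.1, hc2.2]
  · exfalso
    push_neg at hc1 hc2
    rcases le_or_gt (u 0) (u 1 - u 0) with h | h
    · have := hc1 h; linarith
    · have := hc2 h; linarith

/-- invariant along the iteration -/
lemma FS_inv (v : R3) (hv : v ∈ O3) (hs : v 0 + v 1 ≤ v 2) (n : ℕ) :
    (FS^[n] v) ∈ O3 ∧ (FS^[n] v) 0 + (FS^[n] v) 1 ≤ (FS^[n] v) 2 ∧
    (∃ a b c d : ℤ, (FS^[n] v) 0 = a * v 0 + b * v 1 ∧ (FS^[n] v) 1 = c * v 0 + d * v 1) ∧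
    (∃ a b c d : ℤ, v 0 = a * (FS^[n] v) 0 + b * (FS^[n] v) 1 ∧
      v 1 = c * (FS^[n] v) 0 + d * (FS^[n] v) 1) := by
  induction n with
  | zero =>
    refine ⟨hv, hs, ⟨1, 0, 0, 1, by simp, by simp⟩, ⟨1, 0, 0, 1, by simp, by simp⟩⟩
  | succ n ih =>
    obtain ⟨hO, hsum, ⟨a, b, c, d, hf0, hf1⟩, ⟨a', b', c', d', hb0, hb1⟩⟩ := ih
    rw [Function.iterate_succ_apply']
    set u := FS^[n] v with hu
    obtain ⟨hO', hsum', hpair⟩ := FS_step u hO hsum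
    refine ⟨hO', hsum', ?_, ?_⟩
    · rcases hpair with ⟨e0, e1⟩ | ⟨e0, e1⟩
      · exact ⟨a, b, c - a, d - b, by rw [e0, hf0], by rw [e1, hf0, hf1]; push_cast; ring⟩
      · exact ⟨c - a, d - b, a, b, by rw [e0, hf0, hf1]; push_cast; ring, by rw [e1, hf0]⟩
    · rcases hpair with ⟨e0, e1⟩ | ⟨e0, e1⟩
      · -- u0 = (FSu)0, u1 = (FSu)0 + (FSu)1
        refine ⟨a' + b', b', c' + d', d', ?_, ?_⟩
        · rw [hb0]; have : u 1 = FS u 0 + FS u 1 := by rw [e0, e1]; ring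
          rw [this, e0]; push_cast; ring
        · rw [hb1]; have : u 1 = FS u 0 + FS u 1 := by rw [e0, e1]; ring
          rw [this, e0]; push_cast; ring
      · -- u0 = (FSu)1, u1 = (FSu)0 + (FSu)1
        refine ⟨b', a' + b', d', c' + d', ?_, ?_⟩
        · rw [hb0]; have : u 1 = FS u 0 + FS u 1 := by rw [e0, e1]; ring
          rw [this, e1]; push_cast; ring
        · rw [hb1]; have : u 1 = FS u 0 + FS u 1 := by rw [e0, e1]; ring
          rw [this, e1]; push_cast; ring


lemma dense_zm (β : ℝ) (hβ : Irrational β) (a b : ℝ) (hab : a < b) :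
    ∃ k m : ℤ, a < β * k + m ∧ β * k + m < b := by
  rcases AddSubgroup.dense_or_cyclic (AddSubgroup.closure ({β, 1} : Set ℝ)) with hd | ⟨z, hz⟩
  · obtain ⟨c, hcS, hc1, hc2⟩ := hd.exists_between hab
    rw [SetLike.mem_coe, AddSubgroup.mem_closure_pair] at hcS
    obtain ⟨k, m, hkm⟩ := hcS
    refine ⟨k, m, ?_, ?_⟩ <;> rw [show β * k + m = k • β + m • (1:ℝ) by
      simp [zsmul_eq_mul]; ring] <;> rw [hkm] <;> assumption
  · exfalso
    have hβS : β ∈ AddSubgroup.closure ({β, 1} : Set ℝ) :=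
      AddSubgroup.subset_closure (by simp)
    have h1S : (1:ℝ) ∈ AddSubgroup.closure ({β, 1} : Set ℝ) :=
      AddSubgroup.subset_closure (by simp)
    rw [hz, AddSubgroup.mem_closure_singleton] at hβS h1S
    obtain ⟨n, hn⟩ := hβS
    obtain ⟨n2, hn2⟩ := h1S
    have hn2ne : (n2 : ℝ) ≠ 0 := by
      intro h
      rw [zsmul_eq_mul, h, zero_mul] at hn2
      exact zero_ne_one hn2
    refine hβ ⟨(n : ℚ) / (n2 : ℚ), ?_⟩
    rw [zsmul_eq_mul] at hn hn2
    push_cast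
    rw [div_eq_iff hn2ne, ← hn, mul_assoc, mul_comm z (n2:ℝ), hn2, mul_one]
section Conn
variable (v : R3) (g β : ℝ) (p q cc dd : ℤ)
  (hg : 0 < g) (hβ : Irrational β)
  (hp : 0 ≤ p) (hq : 1 ≤ q) (hpqβ : (p : ℝ) + q ≤ β) (hco : cc * p + dd * q = 1)
  (h0 : v 0 = p * g) (h1 : v 1 = q * g) (h2 : v 2 = β * g)

include hg hp hq hpqβ hco h0 h1 h2

lemma dot_eq (x : Z3) :
    dot3 x v = g * (((p * x 0 + q * x 1 : ℤ) : ℝ) + β * x 2) := by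
  unfold dot3
  rw [Fin.sum_univ_three, h0, h1, h2]
  push_cast
  ring

lemma mem_plane_iff (ω : ℝ) (x : Z3) :
    x ∈ Plane v ω ↔ 0 ≤ ((p * x 0 + q * x 1 : ℤ) : ℝ) + β * x 2 ∧
      ((p * x 0 + q * x 1 : ℤ) : ℝ) + β * x 2 < ω / g := by
  unfold Plane
  rw [Set.mem_setOf_eq, dot_eq v g β p q cc dd hg hp hq hpqβ hco h0 h1 h2,
    mul_nonneg_iff_of_pos_left hg]
  constructor
  · rintro ⟨a, b⟩
    exact ⟨a, by rw [lt_div_iff₀ hg, mul_comm]; exact b⟩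
  · rintro ⟨a, b⟩
    exact ⟨a, by rw [lt_div_iff₀ hg, mul_comm] at b; exact b⟩

lemma hbeta1 : (1:ℝ) ≤ β := by
  have : (1:ℝ) ≤ (p:ℝ) + q := by
    have : (1:ℤ) ≤ p + q := by omega
    exact_mod_cast this
  linarith

include hβ

lemma sliceConn (x y : Z3) (hx : x ∈ Plane v (v 2 + g)) (hy : y ∈ Plane v (v 2 + g))
    (hxy : x 2 = y 2) :
    Relation.ReflTransGen (fun a b => b ∈ Plane v (v 2 + g) ∧ adj3 a b) x y := by
  have hmem := mem_plane_iff v g β p q cc dd hg hp hq hpqβ hco h0 h1 h2 (v 2 + g)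
  have homg : (v 2 + g) / g = β + 1 := by rw [h2]; field_simp
  rw [hmem, homg] at hx hy
  set k := x 2 with hk
  set c : ℤ := -⌊β * k⌋ with hc
  set Ux : ℤ := p * x 0 + q * x 1 with hUx
  set Uy : ℤ := p * y 0 + q * y 1 with hUy
  set d : ℤ := max (max Ux Uy) (c + p + q) with hd
  have hfl : (⌊β * k⌋ : ℝ) ≤ β * k := Int.floor_le _
  have hcr : (c : ℝ) = -((⌊β * k⌋ : ℤ) : ℝ) := by rw [hc]; push_cast; ring
  have hfl2 : β * k < ⌊β * k⌋ + 1 := Int.lt_floor_add_one _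
  have hcx : c ≤ Ux := by
    have : ((-Ux : ℤ) : ℝ) ≤ β * k := by push_cast; linarith [hx.1]
    have := Int.le_floor.mpr this
    omega
  have hcy : c ≤ Uy := by
    have : ((-Uy : ℤ) : ℝ) ≤ β * k := by
      push_cast
      have := hy.1
      rw [← hxy] at this
      linarith
    have := Int.le_floor.mpr this
    omega
  have hpq : (p : ℝ) + q ≤ β := hpqβ
  have hdlt : (d : ℝ) + β * k < β + 1 := by
    rcases max_cases (max Ux Uy) (c + p + q) with ⟨he, _⟩ | ⟨he, _⟩
    · rcases max_cases Ux Uy with ⟨he2, _⟩ | ⟨he2, _⟩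
      · rw [hd, he, he2]; exact hx.2
      · rw [hd, he, he2]; rw [← hxy] at hy; exact hy.2
    · rw [hd, he]; push_cast; rw [hc]; push_cast; linarith
  have hbound : ∀ z : Z3, z 2 = k → c ≤ p * z 0 + q * z 1 → p * z 0 + q * z 1 ≤ d →
      z ∈ Plane v (v 2 + g) := by
    intro z hz2 hz1 hz3
    rw [hmem z, homg]
    have hle : (c : ℝ) ≤ ((p * z 0 + q * z 1 : ℤ) : ℝ) := by exact_mod_cast hz1
    have hle2 : ((p * z 0 + q * z 1 : ℤ) : ℝ) ≤ (d : ℝ) := by exact_mod_cast hz3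
    constructor
    · rw [hz2]; rw [hcr] at hle; push_cast at hle ⊢; linarith
    · rw [hz2]; linarith
  exact windowWalk (Plane v (v 2 + g)) p q c d k hp (by omega)
    (le_max_right _ _) hbound _ x y hk.symm (hxy ▸ hk.symm)
    hcx (le_trans (le_max_left _ _) (le_max_left _ _))
    hcy (le_trans (le_max_right _ _) (le_max_left _ _)) rfl
end Conn

section Conn2
variable (v : R3) (g β : ℝ) (p q cc dd : ℤ)
  (hg : 0 < g) (hβ : Irrational β)
  (hp : 0 ≤ p) (hq : 1 ≤ q) (hpqβ : (p : ℝ) + q ≤ β) (hco : cc * p + dd * q = 1)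
  (h0 : v 0 = p * g) (h1 : v 1 = q * g) (h2 : v 2 = β * g)

def anch (k : ℤ) : Z3 := ![cc * (-⌊β * k⌋), dd * (-⌊β * k⌋), k]
def bri (k : ℤ) : Z3 := ![cc * (-⌊β * k⌋), dd * (-⌊β * k⌋), k + 1]

include hg hβ hp hq hpqβ hco h0 h1 h2

set_option maxHeartbeats 2000000 in
lemma connMain : Connected3 (Plane v (v 2 + g)) := by
  have hmem := mem_plane_iff v g β p q cc dd hg hp hq hpqβ hco h0 h1 h2 (v 2 + g)
  have homg : (v 2 + g) / g = β + 1 := by rw [h2]; field_simp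
  have hb1 : (1:ℝ) ≤ β := hbeta1 v g β p q cc dd hg hp hq hpqβ hco h0 h1 h2
  have hUa : ∀ k : ℤ, p * (anch β cc dd k) 0 + q * (anch β cc dd k) 1 = -⌊β * k⌋ := by
    intro k
    show p * (cc * (-⌊β * k⌋)) + q * (dd * (-⌊β * k⌋)) = -⌊β * k⌋
    linear_combination (-⌊β * (k:ℝ)⌋ : ℤ) * hco
  have hUb : ∀ k : ℤ, p * (bri β cc dd k) 0 + q * (bri β cc dd k) 1 = -⌊β * k⌋ := by
    intro k
    show p * (cc * (-⌊β * k⌋)) + q * (dd * (-⌊β * k⌋)) = -⌊β * k⌋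
    linear_combination (-⌊β * (k:ℝ)⌋ : ℤ) * hco
  have hfr : ∀ k : ℤ, 0 ≤ ((-⌊β * k⌋ : ℤ) : ℝ) + β * k ∧ ((-⌊β * k⌋ : ℤ) : ℝ) + β * k < 1 := by
    intro k
    have := Int.floor_le (β * k)
    have := Int.lt_floor_add_one (β * k)
    constructor <;> push_cast <;> linarith
  have hanchA : ∀ k : ℤ, anch β cc dd k ∈ Plane v (v 2 + g) := by
    intro k
    rw [hmem _, homg, hUa k]
    have h2' : (anch β cc dd k) 2 = k := rfl
    rw [h2']
    exact ⟨(hfr k).1, by linarith [(hfr k).2]⟩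
  have hbriA : ∀ k : ℤ, bri β cc dd k ∈ Plane v (v 2 + g) := by
    intro k
    rw [hmem _, homg, hUb k]
    have h2' : (bri β cc dd k) 2 = k + 1 := rfl
    rw [h2']
    have := (hfr k).1
    have := (hfr k).2
    constructor <;> push_cast at * <;> nlinarith
  have hadj1 : ∀ k : ℤ, adj3 (anch β cc dd k) (bri β cc dd k) := by
    intro k
    unfold adj3 anch bri
    rw [Fin.sum_univ_three]
    simp
  have hadj2 : ∀ k : ℤ, adj3 (bri β cc dd k) (anch β cc dd k) := by
    intro k
    unfold adj3 anch bri
    rw [Fin.sum_univ_three]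
    simp
  set A := Plane v (v 2 + g)
  set step := fun a b : Z3 => b ∈ A ∧ adj3 a b with hstep
  have slc : ∀ x y : Z3, x ∈ A → y ∈ A → x 2 = y 2 → Relation.ReflTransGen step x y :=
    fun x y hx hy hxy => sliceConn v g β p q cc dd hg hβ hp hq hpqβ hco h0 h1 h2 x y hx hy hxy
  have hup : ∀ k : ℤ, Relation.ReflTransGen step (anch β cc dd k) (anch β cc dd (k+1)) := by
    intro k
    exact Relation.ReflTransGen.head ⟨hbriA k, hadj1 k⟩
      (slc _ _ (hbriA k) (hanchA (k+1)) rfl)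
  have hdown : ∀ k : ℤ, Relation.ReflTransGen step (anch β cc dd (k+1)) (anch β cc dd k) := by
    intro k
    exact (slc _ _ (hanchA (k+1)) (hbriA k) rfl).tail ⟨hanchA k, hadj2 k⟩
  have hchain : ∀ k : ℤ, Relation.ReflTransGen step (anch β cc dd 0) (anch β cc dd k) ∧
      Relation.ReflTransGen step (anch β cc dd k) (anch β cc dd 0) := by
    intro k
    induction k using Int.induction_on with
    | zero => exact ⟨Relation.ReflTransGen.refl, Relation.ReflTransGen.refl⟩
    | succ i ih => exact ⟨ih.1.trans (hup i), (hdown i).trans ih.2⟩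
    | pred i ih =>
      have e1 : (-(i:ℤ) - 1) + 1 = -(i:ℤ) := by ring
      have hd := hdown (-(i:ℤ)-1)
      have hu := hup (-(i:ℤ)-1)
      rw [e1] at hd hu
      exact ⟨ih.1.trans hd, hu.trans ih.2⟩
  refine ⟨⟨anch β cc dd 0, hanchA 0⟩, fun x hx y hy => ?_⟩
  have t1 : Relation.ReflTransGen step x (anch β cc dd (x 2)) :=
    slc _ _ hx (hanchA _) rfl
  have t2 : Relation.ReflTransGen step (anch β cc dd (y 2)) y :=
    slc _ _ (hanchA _) hy rfl
  exact ((t1.trans (hchain (x 2)).2).trans (hchain (y 2)).1).trans t2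
end Conn2

section LB
variable (v : R3) (g β : ℝ) (p q cc dd : ℤ)
  (hg : 0 < g) (hβ : Irrational β)
  (hp : 0 ≤ p) (hq : 1 ≤ q) (hpqβ : (p : ℝ) + q ≤ β) (hco : cc * p + dd * q = 1)
  (h0 : v 0 = p * g) (h1 : v 1 = q * g) (h2 : v 2 = β * g)

include hg hβ hp hq hpqβ hco h0 h1 h2

set_option maxHeartbeats 1000000 in
lemma lowerBound (ω : ℝ) (hcn : Connected3 (Plane v ω)) : v 2 + g ≤ ω := by
  by_contra hlt
  push_neg at hlt
  obtain ⟨x₀, hx₀⟩ := hcn.1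
  have hmem := mem_plane_iff v g β p q cc dd hg hp hq hpqβ hco h0 h1 h2 ω
  have hωpos : 0 < ω := lt_of_le_of_lt hx₀.1 hx₀.2
  set lam := ω / g with hlamdef
  have hb1 : (1:ℝ) ≤ β := hbeta1 v g β p q cc dd hg hp hq hpqβ hco h0 h1 h2
  have hlam_pos : 0 < lam := div_pos hωpos hg
  have hlam_lt : lam < β + 1 := by
    rw [hlamdef, div_lt_iff₀ hg]
    nlinarith [hlt, h2]
  set Gap : ℤ → Prop :=
    fun k => ∀ m : ℤ, ¬(0 ≤ (m:ℝ) + β*k ∧ (m:ℝ) + β*(k+1) < lam) with hGap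
  -- band invariant
  have hband : ∀ k1 k2 : ℤ, Gap k1 → Gap k2 → ∀ x y : Z3,
      Relation.ReflTransGen (fun a b => b ∈ Plane v ω ∧ adj3 a b) x y →
      x ∈ Plane v ω → k1 < x 2 → x 2 ≤ k2 →
      (y ∈ Plane v ω ∧ k1 < y 2 ∧ y 2 ≤ k2) := by
    intro k1 k2 hg1 hg2 x y hxy hx hx1 hx2
    induction hxy with
    | refl => exact ⟨hx, hx1, hx2⟩
    | @tail b c hab hbc ih =>
      obtain ⟨hbP, hb1', hb2'⟩ := ih
      obtain ⟨hcP, hadj⟩ := hbc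
      have hsum : |b 0 - c 0| + |b 1 - c 1| + |b 2 - c 2| = 1 := by
        have := hadj
        unfold adj3 at this
        rwa [Fin.sum_univ_three] at this
      rw [Int.abs_eq_natAbs, Int.abs_eq_natAbs, Int.abs_eq_natAbs] at hsum
      have hcase : (b 0 = c 0 ∧ b 1 = c 1 ∧ (c 2 = b 2 + 1 ∨ c 2 = b 2 - 1)) ∨ c 2 = b 2 := by
        omega
      rcases hcase with ⟨he0, he1, hud⟩ | he2
      · rcases hud with hup | hdn
        · rcases le_or_gt (c 2) k2 with hle | hgt
          · exact ⟨hcP, by omega, hle⟩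
          · exfalso
            have hbk : b 2 = k2 := by omega
            have hvb := (hmem b).mp hbP
            have hvc := (hmem c).mp hcP
            rw [hbk] at hvb
            rw [hup, hbk] at hvc
            refine hg2 (p * b 0 + q * b 1) ⟨hvb.1, ?_⟩
            have := hvc.2
            rw [← he0, ← he1] at this
            push_cast at this ⊢
            linarith
        · rcases lt_or_ge k1 (c 2) with hle | hgt
          · exact ⟨hcP, hle, by omega⟩
          · exfalso
            have hck : c 2 = k1 := by omega
            have hbk : b 2 = k1 + 1 := by omega
            have hvb := (hmem b).mp hbP
            have hvc := (hmem c).mp hcP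
            rw [hck] at hvc
            rw [hbk] at hvb
            refine hg1 (p * b 0 + q * b 1) ⟨?_, ?_⟩
            · have := hvc.1
              rw [← he0, ← he1] at this
              push_cast at this ⊢
              linarith
            · have := hvb.2
              push_cast at this ⊢
              linarith
      · exact ⟨hcP, by omega, by omega⟩
  -- membership of standard points
  have hpt : ∀ m k : ℤ, 0 ≤ (m:ℝ) + β * k → (m:ℝ) + β * k < lam →
      (![cc*m, dd*m, k] : Z3) ∈ Plane v ω := by
    intro m k hm1 hm2
    have hz : p * (![cc*m, dd*m, k] : Z3) 0 + q * (![cc*m, dd*m, k] : Z3) 1 = m := by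
      show p * (cc*m) + q * (dd*m) = m
      linear_combination m * hco
    rw [hmem _, hz]
    exact ⟨hm1, hm2⟩
  have h0P : (0 : Z3) ∈ Plane v ω := by
    have : dot3 0 v = 0 := by unfold dot3; simp
    exact ⟨by rw [this], by rw [this]; exact hωpos⟩
  rcases le_or_gt lam β with hlb | hlb
  · -- all boundaries are gaps
    have gapAll : ∀ k : ℤ, Gap k := by
      intro k m hm
      have he : β * ((k:ℝ)+1) = β*k + β := by ring
      rcases hm with ⟨a, b⟩
      rw [he] at b
      linarith
    -- find a nonempty slice k ≠ 0
    have hex : ∃ k m : ℤ, k ≠ 0 ∧ 0 ≤ (m:ℝ) + β*k ∧ (m:ℝ) + β*k < lam := by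
      rcases le_or_gt lam 1 with hl1 | hl1
      · obtain ⟨k, m, hkm1, hkm2⟩ := dense_zm β hβ 0 lam hlam_pos
        refine ⟨k, m, ?_, by linarith, by linarith⟩
        intro hk0
        rw [hk0] at hkm1 hkm2
        push_cast at hkm1 hkm2
        norm_num at hkm1 hkm2
        have : (0:ℤ) < m ∧ (m:ℝ) < 1 := ⟨by exact_mod_cast hkm1, by linarith⟩
        have : (0:ℤ) < m ∧ m < 1 := ⟨this.1, by exact_mod_cast this.2⟩
        omega
      · refine ⟨1, -⌊β⌋, one_ne_zero, ?_, ?_⟩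
        · push_cast
          linarith [Int.floor_le β]
        · push_cast
          linarith [Int.lt_floor_add_one β]
    obtain ⟨k, m, hk0, hm1, hm2⟩ := hex
    have hzP := hpt m k hm1 hm2
    have hchain := hcn.2 _ hzP _ h0P
    have hband' := hband (k-1) k (gapAll _) (gapAll _) _ _ hchain hzP
      (by show k - 1 < (![cc*m, dd*m, k] : Z3) 2; show k - 1 < k; omega)
      (by show (![cc*m, dd*m, k] : Z3) 2 ≤ k; show k ≤ k; omega)
    have h02 : (0 : Z3) 2 = 0 := rfl
    rcases hband' with ⟨_, hb1', hb2'⟩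
    rw [h02] at hb1' hb2'
    omega
  · -- β < lam < β + 1
    obtain ⟨ka, ma, ha1, ha2⟩ := dense_zm β hβ (lam - β) 1 (by linarith)
    obtain ⟨kb, mb, hbb1, hbb2⟩ := dense_zm β hβ (lam - β) (β*ka + ma) ha1
    have gapWit : ∀ k m0 : ℤ, lam - β ≤ β*(k:ℝ) + m0 → β*(k:ℝ) + m0 < 1 → Gap k := by
      intro k m0 hw1 hw2 m hm
      rcases hm with ⟨a, b⟩
      have he : β * ((k:ℝ)+1) = β*k + β := by ring
      rw [he] at b
      have h1' : (m:ℝ) < m0 := by linarith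
      have h2' : (m0:ℝ) - 1 < m := by linarith
      have : m < m0 := by exact_mod_cast h1'
      have : m0 - 1 < m := by exact_mod_cast h2'
      omega
    have hgka : Gap ka := gapWit ka ma (le_of_lt ha1) ha2
    have hgkb : Gap kb := gapWit kb mb (le_of_lt hbb1) (by linarith)
    have hne : ka ≠ kb := by
      intro he
      rw [he] at ha2 hbb2
      have : (0:ℝ) < ma - mb := by linarith
      have h9 : (mb:ℝ) < ma := by linarith
      have h8 : (ma:ℝ) - mb < 1 := by linarith
      have : mb < ma := by exact_mod_cast h9
      have : ma - mb < 1 := by exact_mod_cast h8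
      omega
    set k1 := min ka kb with hk1
    set k2 := max ka kb with hk2
    have hgk1 : Gap k1 := by rcases min_choice ka kb with h | h <;> rw [hk1, h] <;> assumption
    have hgk2 : Gap k2 := by rcases max_choice ka kb with h | h <;> rw [hk2, h] <;> assumption
    have hk12 : k1 < k2 := by
      rcases le_or_gt ka kb with h | h
      · have : k1 = ka := min_eq_left h
        have h2' : k2 = kb := max_eq_right h
        omega
      · have : k1 = kb := min_eq_right (le_of_lt h)
        have h2' : k2 = ka := max_eq_left (le_of_lt h)
        omega
    have hfr : ∀ j : ℤ, 0 ≤ ((-⌊β * j⌋ : ℤ) : ℝ) + β * j ∧ ((-⌊β * j⌋ : ℤ) : ℝ) + β * j < 1 := by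
      intro j
      have := Int.floor_le (β * j)
      have := Int.lt_floor_add_one (β * j)
      constructor <;> push_cast <;> linarith
    have hxP := hpt (-⌊β * k2⌋) k2 (hfr k2).1 (by linarith [(hfr k2).2])
    set j2 : ℤ := k2 + 1 with hj2
    have hyP := hpt (-⌊β * (j2:ℝ)⌋) j2 (hfr j2).1 (by linarith [hb1, hlb, (hfr j2).2])
    have hchain := hcn.2 _ hxP _ hyP
    have hband' := hband k1 k2 hgk1 hgk2 _ _ hchain hxP
      (by show k1 < (![cc * -⌊β * k2⌋, dd * -⌊β * k2⌋, k2] : Z3) 2; show k1 < k2; omega)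
      (by show (![cc * -⌊β * k2⌋, dd * -⌊β * k2⌋, k2] : Z3) 2 ≤ k2; show k2 ≤ k2; omega)
    rcases hband' with ⟨_, _, hb2'⟩
    have hj2' : (![cc * -⌊β * (j2:ℝ)⌋, dd * -⌊β * (j2:ℝ)⌋, j2] : Z3) 2 = j2 := rfl
    omega
end LB
lemma extract (v : R3) (hv : v ∈ O3)
    (hdim : Module.finrank ℚ (Submodule.span ℚ ({v 0, v 1, v 2} : Set ℝ)) = 2)
    (hsum : v 0 + v 1 ≤ v 2) (n0 : ℕ) (hn0 : (FS^[n0] v) 0 = 0) :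
    ∃ (g β : ℝ) (p q cc dd : ℤ), 0 < g ∧ Irrational β ∧ 0 ≤ p ∧ 1 ≤ q ∧
      (p:ℝ) + q ≤ β ∧ cc * p + dd * q = 1 ∧
      v 0 = p * g ∧ v 1 = q * g ∧ v 2 = β * g ∧ rgcd (v 0) (v 1) = g := by
  obtain ⟨hO, hsum', ⟨a, b, c, d, hf0, hf1⟩, ⟨a', b', c', d', hb0, hb1⟩⟩ :=
    FS_inv v hv hsum n0
  set g := (FS^[n0] v) 1 with hgdef
  rw [hn0] at hb0 hb1
  have hv0 : v 0 = (b' : ℝ) * g := by rw [hb0]; ring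
  have hv1 : v 1 = (d' : ℝ) * g := by rw [hb1]; ring
  -- dimension helper
  have dim_le : ∀ z : ℝ, v 0 ∈ (ℚ ∙ z) → v 1 ∈ (ℚ ∙ z) → v 2 ∈ (ℚ ∙ z) → False := by
    intro z hz0 hz1 hz2
    have hle : Submodule.span ℚ ({v 0, v 1, v 2} : Set ℝ) ≤ ℚ ∙ z := by
      rw [Submodule.span_le]
      intro x hx
      rcases hx with rfl | rfl | rfl
      · exact hz0
      · exact hz1
      · exact hz2
    have hfin : Module.finrank ℚ (ℚ ∙ z) ≤ 1 := by
      rcases eq_or_ne z 0 with rfl | hz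
      · rw [Submodule.span_zero_singleton]
        simp [finrank_bot]
      · rw [finrank_span_singleton hz]
    have := Submodule.finrank_mono hle
    omega
  have hgnn : 0 ≤ g := le_trans hO.1 hO.2.1
  have hgpos : 0 < g := by
    rcases lt_or_eq_of_le hgnn with h | h
    · exact h
    · exfalso
      apply dim_le (v 2)
      · rw [hv0, ← h, mul_zero]; exact zero_mem _
      · rw [hv1, ← h, mul_zero]; exact zero_mem _
      · exact Submodule.mem_span_singleton_self _
  have hgne : g ≠ 0 := ne_of_gt hgpos
  -- p, q facts
  have hbnn : (0:ℝ) ≤ (b' : ℝ) := by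
    by_contra hneg
    push_neg at hneg
    nlinarith [hv.1, hv0, hgpos]
  have hbnn' : (0:ℤ) ≤ b' := by exact_mod_cast hbnn
  have hbd : (b' : ℝ) ≤ (d' : ℝ) := by
    have h01 : v 0 ≤ v 1 := hv.2.1
    rw [hv0, hv1] at h01
    exact le_of_mul_le_mul_right h01 hgpos
  have hbd' : b' ≤ d' := by exact_mod_cast hbd
  -- coprimality
  have hcopR : ((c * b' + d * d' : ℤ) : ℝ) * g = 1 * g := by
    push_cast
    rw [one_mul]
    calc ((c:ℝ) * b' + d * d') * g = (c:ℝ) * ((b':ℝ) * g) + (d:ℝ) * ((d':ℝ) * g) := by ring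
    _ = (c:ℝ) * v 0 + (d:ℝ) * v 1 := by rw [hv0, hv1]
    _ = g := by rw [hf1]
  have hcop : c * b' + d * d' = 1 := by
    have := mul_right_cancel₀ hgne hcopR
    exact_mod_cast this
  have hq1 : 1 ≤ d' := by
    by_contra hd0
    push_neg at hd0
    have hd'0 : d' = 0 := by omega
    have hb'0 : b' = 0 := by omega
    rw [hd'0, hb'0] at hcop
    simp at hcop
  -- beta
  set β := v 2 / g with hβdef
  have hv2 : v 2 = β * g := by
    rw [hβdef]
    field_simp
  have hβirr : Irrational β := by
    by_contra hri
    unfold Irrational at hri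
    rw [Set.not_notMem] at hri
    obtain ⟨r, hr⟩ := hri
    apply dim_le g
    · rw [Submodule.mem_span_singleton]
      exact ⟨(b' : ℚ), by rw [Rat.smul_def, hv0]; push_cast; ring⟩
    · rw [Submodule.mem_span_singleton]
      exact ⟨(d' : ℚ), by rw [Rat.smul_def, hv1]; push_cast; ring⟩
    · rw [Submodule.mem_span_singleton]
      exact ⟨r, by rw [Rat.smul_def, hv2, ← hr]⟩
  have hpqβ : (b' : ℝ) + d' ≤ β := by
    have : ((b':ℝ) + d') * g ≤ β * g := by
      rw [← hv2]
      calc ((b':ℝ) + d') * g = v 0 + v 1 := by rw [hv0, hv1]; ring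
      _ ≤ v 2 := hsum
    exact le_of_mul_le_mul_right this hgpos
  -- rgcd
  have hrg : rgcd (v 0) (v 1) = g := by
    unfold rgcd
    have hgS : g ∈ {x : ℝ | 0 < x ∧ ∃ m n : ℤ, x = m * v 0 + n * v 1} := by
      refine ⟨hgpos, c, d, ?_⟩
      rw [hf1]
    have hlb : ∀ x ∈ {x : ℝ | 0 < x ∧ ∃ m n : ℤ, x = m * v 0 + n * v 1}, g ≤ x := by
      rintro x ⟨hx, m, n, hmn⟩
      have hxk : x = ((m * b' + n * d' : ℤ) : ℝ) * g := by
        rw [hmn, hv0, hv1]; push_cast; ring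
      have hk1 : (1:ℝ) ≤ ((m * b' + n * d' : ℤ) : ℝ) := by
        have hkpos : (0:ℝ) < ((m * b' + n * d' : ℤ) : ℝ) := by
          by_contra hkn
          push_neg at hkn
          nlinarith [hxk, hx, hgpos]
        have : (0:ℤ) < m * b' + n * d' := by exact_mod_cast hkpos
        have : (1:ℤ) ≤ m * b' + n * d' := this
        exact_mod_cast this
      nlinarith [hk1, hgpos, hxk]
    exact le_antisymm (csInf_le ⟨g, hlb⟩ hgS) (le_csInf ⟨g, hgS⟩ hlb)
  exact ⟨g, β, b', d', c, d, hgpos, hβirr, hbnn', hq1, hpqβ, hcop, hv0, hv1, hv2, hrg⟩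
/-- If `v ∈ O₃⁺`, `dim_ℚ(v₁,v₂,v₃) = 2`, `v₁ + v₂ ≤ v₃` and
`v₁⁽ⁿ⁰⁾ = 0` for some `n₀`, then `P(v, Ω(v))` is 2-connected and
`Ω(v) = v₃ + gcd(v₁, v₂)`. -/
theorem connected_dim_two_case (v : R3) (hv : v ∈ O3)
    (hdim : Module.finrank ℚ (Submodule.span ℚ ({v 0, v 1, v 2} : Set ℝ)) = 2)
    (hsum : v 0 + v 1 ≤ v 2) (n0 : ℕ) (hn0 : (FS^[n0] v) 0 = 0) :
    Connected3 (Plane v (omegaConn v)) ∧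
    omegaConn v = v 2 + rgcd (v 0) (v 1) := by
  --
  obtain ⟨g, β, p, q, cc, dd, hg, hβ, hp, hq, hpqβ, hco, h0', h1', h2', hrg⟩ :=
    extract v hv hdim hsum n0 hn0
  have hcn := connMain v g β p q cc dd hg hβ hp hq hpqβ hco h0' h1' h2'
  have hb1 : (1:ℝ) ≤ β := hbeta1 v g β p q cc dd hg hp hq hpqβ hco h0' h1' h2'
  have hpos : (0:ℝ) ≤ v 2 + g := by nlinarith [hg, hb1, h2']
  have homc : omegaConn v = v 2 + g := by
    unfold omegaConn
    apply le_antisymm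
    · exact csInf_le ⟨0, fun x hx => hx.1⟩ ⟨hpos, hcn⟩
    · exact le_csInf ⟨v 2 + g, hpos, hcn⟩
        (fun b hb => lowerBound v g β p q cc dd hg hβ hp hq hpqβ hco h0' h1' h2' b hb.2)
  refine ⟨?_, ?_⟩
  · rw [homc]; exact hcn
  · rw [homc, hrg]

end
end
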